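/- arXiv:1702.05443 — 6 statements merged into one kernel-verified Lean document; each statement's English description precedes it below -/
import Mathlib

section
/- Let C and Ĉ = C + Δ be n×n Hermitian complex matrices. Let u_j be a unit eigenvector of C with eigenvalue λ_j, let λ_i be another eigenvalue of C with λ_i ≠ λ_j, and let û_i be a unit eigenvector of Ĉ with eigenvalue λ̂_i. If sign(λ_i − λ_j)·2λ̂_i > sign(λ_i − λ_j)·(λ_i + λ_j), then |⟨û_i, u_j⟩| ≤ 2‖Δ u_j‖₂ / |λ_i − λ_j|. -/
open Matrix Finset

/-- For Hermitian `C` and `Ĉ = C + Δ`, a unit eigenvector `u_j` of `C`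
with eigenvalue `λ_j`, another eigenvalue `λ_i ≠ λ_j` of `C`, and a unit eigenvector
`û_i` of `Ĉ` with eigenvalue `λ̂_i` satisfying
`sign(λ_i - λ_j) · 2 λ̂_i > sign(λ_i - λ_j) · (λ_i + λ_j)`, one has
`|⟨û_i, u_j⟩| ≤ 2 ‖Δ u_j‖₂ / |λ_i - λ_j|`. -/
theorem eigvec_angle_refined_bound {n : ℕ}
    (C Δ Chat : Matrix (Fin n) (Fin n) ℂ)
    (hC : C.IsHermitian) (hChat : Chat.IsHermitian) (hsum : Chat = C + Δ)
    (uj uhati : Fin n → ℂ) (lamj lami lamhati : ℝ)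
    (huj : star uj ⬝ᵥ uj = 1) (hCuj : C.mulVec uj = (lamj : ℂ) • uj)
    (v : Fin n → ℂ) (hv : v ≠ 0) (hCv : C.mulVec v = (lami : ℂ) • v)
    (hne : lami ≠ lamj)
    (huhati : star uhati ⬝ᵥ uhati = 1)
    (hCuhati : Chat.mulVec uhati = (lamhati : ℂ) • uhati)
    (hcond : Real.sign (lami - lamj) * (2 * lamhati)
      > Real.sign (lami - lamj) * (lami + lamj)) :
    ‖star uhati ⬝ᵥ uj‖
      ≤ 2 * Real.sqrt (∑ a, ‖Δ.mulVec uj a‖ ^ 2) / |lami - lamj| := by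
  set d := Δ.mulVec uj with hd
  -- key algebraic identity
  have h1 : star uhati ⬝ᵥ Chat.mulVec uj = (lamhati : ℂ) * (star uhati ⬝ᵥ uj) := by
    rw [dotProduct_mulVec, ← hChat.eq, ← star_mulVec, hCuhati]
    simp [star_smul, smul_dotProduct, Complex.conj_ofReal]
  have h2 : star uhati ⬝ᵥ Chat.mulVec uj
      = (lamj : ℂ) * (star uhati ⬝ᵥ uj) + star uhati ⬝ᵥ d := by
    rw [hsum, Matrix.add_mulVec, dotProduct_add, hCuj]
    simp [dotProduct_smul, hd]
  have key : ((lamhati : ℂ) - lamj) * (star uhati ⬝ᵥ uj) = star uhati ⬝ᵥ d := by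
    have := h1.symm.trans h2
    ring_nf
    ring_nf at this
    linear_combination this
  -- Cauchy–Schwarz
  set S := Real.sqrt (∑ a, ‖d a‖ ^ 2) with hS
  have hSnn : 0 ≤ S := Real.sqrt_nonneg _
  have hnorm_uhati : ‖((WithLp.equiv 2 _).symm uhati : EuclideanSpace ℂ (Fin n))‖ = 1 := by
    have : (inner ℂ ((WithLp.equiv 2 _).symm uhati : EuclideanSpace ℂ (Fin n))
        ((WithLp.equiv 2 _).symm uhati) : ℂ) = 1 := by
      rw [WithLp.equiv_symm_apply, EuclideanSpace.inner_toLp_toLp, dotProduct_comm]; exact huhati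
    have h' : (‖((WithLp.equiv 2 _).symm uhati : EuclideanSpace ℂ (Fin n))‖ : ℝ) ^ 2 = 1 := by
      rw [@norm_sq_eq_re_inner ℂ, this]; simp
    nlinarith [norm_nonneg ((WithLp.equiv 2 _).symm uhati : EuclideanSpace ℂ (Fin n))]
  have cs : ‖star uhati ⬝ᵥ d‖ ≤ S := by
    have h := norm_inner_le_norm (𝕜 := ℂ) ((WithLp.equiv 2 _).symm uhati : EuclideanSpace ℂ (Fin n))
      ((WithLp.equiv 2 _).symm d)
    rw [hnorm_uhati, one_mul,
      EuclideanSpace.norm_eq, WithLp.equiv_symm_apply, EuclideanSpace.inner_toLp_toLp, dotProduct_comm] at h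
    exact h
  -- gap bound
  have hgap : |lami - lamj| / 2 ≤ |lamhati - lamj| := by
    rcases lt_or_gt_of_ne hne with h | h
    · have hs : Real.sign (lami - lamj) = -1 := Real.sign_of_neg (by linarith)
      rw [hs] at hcond
      have : 2 * lamhati < lami + lamj := by linarith
      rw [abs_of_neg (by linarith : lami - lamj < 0), abs_of_neg (by linarith : lamhati - lamj < 0)]
      linarith
    · have hs : Real.sign (lami - lamj) = 1 := Real.sign_of_pos (by linarith)
      rw [hs] at hcond
      have : lami + lamj < 2 * lamhati := by linarith
      rw [abs_of_pos (by linarith : 0 < lami - lamj), abs_of_pos (by linarith : 0 < lamhati - lamj)]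
      linarith
  have hijpos : 0 < |lami - lamj| := abs_pos.mpr (sub_ne_zero.mpr hne)
  -- combine
  have hmain : |lamhati - lamj| * ‖star uhati ⬝ᵥ uj‖ ≤ S := by
    have : ‖((lamhati : ℂ) - lamj) * (star uhati ⬝ᵥ uj)‖ = |lamhati - lamj| * ‖star uhati ⬝ᵥ uj‖ := by
      rw [norm_mul]
      congr 1
      rw [show ((lamhati : ℂ) - lamj) = ((lamhati - lamj : ℝ) : ℂ) by push_cast; ring,
        Complex.norm_real, Real.norm_eq_abs]
    rw [← this, key]; exact cs
  rw [le_div_iff₀ hijpos]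
  calc ‖star uhati ⬝ᵥ uj‖ * |lami - lamj|
      ≤ ‖star uhati ⬝ᵥ uj‖ * (|lamhati - lamj| * 2) := by
        apply mul_le_mul_of_nonneg_left _ (norm_nonneg _)
        linarith
    _ = 2 * (|lamhati - lamj| * ‖star uhati ⬝ᵥ uj‖) := by ring
    _ ≤ 2 * S := by linarith
end

section
/- Let x_1,…,x_m be i.i.d. random vectors in ℝ^n on a probability space, with mean zero, covariance matrix C = E[x x^T], and E[‖x‖₂⁴] < ∞. Let Ĉ = (1/m) Σ_{p=1}^m x_p x_p^T, let u_1,…,u_n be an orthonormal basis of eigenvectors of C with eigenvalues λ_1 ≥ … ≥ λ_n, and let ω ↦ (û_1(ω),…,û_n(ω)) be a measurable choice of an orthonormal basis of eigenvectors of Ĉ(ω) with eigenvalues λ̂_1(ω) ≥ … ≥ λ̂_n(ω). Fix i, j with λ_i ≠ λ_j, set k_j = (E[‖x x^T u_j‖₂²] − λ_j²)^{1/2}, and let E_{ij} be the event {sign(λ_i − λ_j)·2λ̂_i > sign(λ_i − λ_j)·(λ_i + λ_j)}. Then for every t > 0, P( E_{ij} ∩ {|⟨û_i, u_j⟩| ≥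 t} ) ≤ (1/m)·(2 k_j / (t·|λ_i − λ_j|))². -/
open Matrix Finset MeasureTheory ProbabilityTheory

private lemma eigvec_aux_sq {Dv L li lj : ℝ} (hD : Dv = li - lj) (hD0 : Dv ≠ 0)
    (hs : Real.sign Dv * (2 * L) > Real.sign Dv * (li + lj)) :
    Dv ^ 2 / 4 < (L - lj) ^ 2 := by
  rcases hD0.lt_or_gt with hneg | hpos
  · rw [Real.sign_of_neg hneg] at hs
    nlinarith
  · rw [Real.sign_of_pos hpos] at hs
    nlinarith

set_option maxHeartbeats 1000000 in
/-- (Theorem 3 of the paper.) For i.i.d. mean-zero random vectors with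
covariance `C` and finite fourth moment, sample covariance `Ĉ`, eigenpairs
`(u_j, λ_j)` of `C` (nonincreasing) and measurable eigenpairs `(û_i(ω), λ̂_i(ω))` of
`Ĉ(ω)` (nonincreasing), for `λ_i ≠ λ_j`, `k_j = (E[‖x xᵀ u_j‖₂²] - λ_j²)^{1/2}` and
`t > 0`:
`P(E_{ij} ∩ {|⟨û_i, u_j⟩| ≥ t}) ≤ (1/m) (2 k_j / (t |λ_i - λ_j|))²`, where `E_{ij}` is
the event `sign(λ_i - λ_j) · 2 λ̂_i > sign(λ_i - λ_j) · (λ_i + λ_j)`. -/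
theorem eigvec_angle_concentration {Ω : Type*} [MeasurableSpace Ω]
    (μ : Measure Ω) [IsProbabilityMeasure μ]
    {n m : ℕ} (hm : 0 < m)
    (x : Fin m → Ω → Fin n → ℝ)
    (hmeas : ∀ p, Measurable (x p))
    (hindep : iIndepFun x μ)
    (hident : ∀ p, IdentDistrib (x p) (x ⟨0, hm⟩) μ μ)
    (hmean : ∀ a, ∫ ω, x ⟨0, hm⟩ ω a ∂μ = 0)
    (C : Matrix (Fin n) (Fin n) ℝ)
    (hC : ∀ a b, C a b = ∫ ω, x ⟨0, hm⟩ ω a * x ⟨0, hm⟩ ω b ∂μ)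
    (hL4 : Integrable (fun ω => (∑ a, x ⟨0, hm⟩ ω a ^ 2) ^ 2) μ)
    (Chat : Ω → Matrix (Fin n) (Fin n) ℝ)
    (hChat : ∀ ω, Chat ω = (m : ℝ)⁻¹ • ∑ p, vecMulVec (x p ω) (x p ω))
    (u : Fin n → Fin n → ℝ) (lam : Fin n → ℝ) (hlam : Antitone lam)
    (huortho : ∀ k l, ∑ a, u k a * u l a = if k = l then 1 else 0)
    (hueig : ∀ k, C.mulVec (u k) = lam k • u k)
    (uhat : Fin n → Ω → Fin n → ℝ) (lamhat : Fin n → Ω → ℝ)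
    (huhatmeas : ∀ k, Measurable (uhat k))
    (hlamhatmeas : ∀ k, Measurable (lamhat k))
    (huhatortho : ∀ ω k l, ∑ a, uhat k ω a * uhat l ω a = if k = l then 1 else 0)
    (huhateig : ∀ ω k, (Chat ω).mulVec (uhat k ω) = lamhat k ω • uhat k ω)
    (hlamhatmono : ∀ ω, Antitone (fun k => lamhat k ω))
    (i j : Fin n) (hij : lam i ≠ lam j)
    (kj : ℝ)
    (hkj : kj = Real.sqrt
      ((∫ ω, ∑ a, ((vecMulVec (x ⟨0, hm⟩ ω) (x ⟨0, hm⟩ ω)).mulVec (u j) a) ^ 2 ∂μ)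
        - lam j ^ 2))
    (t : ℝ) (ht : 0 < t) :
    (μ {ω | Real.sign (lam i - lam j) * (2 * lamhat i ω)
              > Real.sign (lam i - lam j) * (lam i + lam j)
            ∧ t ≤ |∑ a, uhat i ω a * u j a|}).toReal
      ≤ (m : ℝ)⁻¹ * (2 * kj / (t * |lam i - lam j|)) ^ 2 := by
  classical
  set x0 : Ω → Fin n → ℝ := x ⟨0, hm⟩ with hx0def
  have hmR : (0:ℝ) < m := Nat.cast_pos.mpr hm
  set D : ℝ := lam i - lam j with hDdef
  have hD0 : D ≠ 0 := sub_ne_zero.mpr hij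
  have hD2 : 0 < D ^ 2 := by
    rcases hD0.lt_or_gt with h | h <;> nlinarith
  -- the function S = ‖x‖²
  set S : Ω → ℝ := fun ω => ∑ c, x0 ω c ^ 2 with hSdef
  have hS_nonneg : ∀ ω, 0 ≤ S ω := fun ω => Finset.sum_nonneg fun c _ => sq_nonneg _
  have hS_meas : Measurable S :=
    Finset.measurable_sum _ fun c _ => ((hmeas _).eval).pow_const 2
  have hL4' : Integrable (fun ω => S ω ^ 2) μ := hL4
  have hS_int : Integrable S μ := by
    refine (hL4'.add (integrable_const 1)).mono' hS_meas.aestronglyMeasurable ?_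
    refine Filter.Eventually.of_forall fun ω => ?_
    simp only [Pi.add_apply, Real.norm_eq_abs]
    rw [abs_of_nonneg (hS_nonneg ω)]
    nlinarith [hS_nonneg ω]
  have hsq_le_S : ∀ ω a, x0 ω a ^ 2 ≤ S ω := fun ω a =>
    Finset.single_le_sum (f := fun c => x0 ω c ^ 2) (fun c _ => sq_nonneg _) (mem_univ a)
  have hunorm : (∑ a, u j a ^ 2) = 1 := by
    have := huortho j j; simpa [sq] using this
  -- φ a v = (v vᵀ u_j)_a, ψ its centered version
  set φ : Fin n → (Fin n → ℝ) → ℝ := fun a v => v a * ∑ b, v b * u j b with hφdef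
  set ψ : Fin n → (Fin n → ℝ) → ℝ := fun a v => φ a v - lam j * u j a with hψdef
  have hφmeas : ∀ a, Measurable (φ a) := fun a =>
    (measurable_pi_apply a).mul
      (Finset.measurable_sum _ fun b _ => (measurable_pi_apply b).mul_const _)
  have hψmeas : ∀ a, Measurable (ψ a) := fun a => (hφmeas a).sub measurable_const
  have hz_sq : ∀ ω, (∑ b, x0 ω b * u j b) ^ 2 ≤ S ω := by
    intro ω
    calc (∑ b, x0 ω b * u j b) ^ 2 ≤ (∑ b, x0 ω b ^ 2) * ∑ b, u j b ^ 2 :=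
          Finset.sum_mul_sq_le_sq_mul_sq _ _ _
      _ = S ω := by rw [hunorm, mul_one]
  have hφ_bound : ∀ a ω, |φ a (x0 ω)| ≤ S ω := by
    intro a ω
    have h1 := hsq_le_S ω a
    have h2 := hz_sq ω
    show |x0 ω a * ∑ b, x0 ω b * u j b| ≤ S ω
    rw [abs_mul]
    nlinarith [abs_nonneg (x0 ω a), abs_nonneg (∑ b, x0 ω b * u j b),
      sq_abs (x0 ω a), sq_abs (∑ b, x0 ω b * u j b), hS_nonneg ω,
      sq_nonneg (|x0 ω a| - |∑ b, x0 ω b * u j b|)]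
  have hφ_int : ∀ a, Integrable (fun ω => φ a (x0 ω)) μ := fun a =>
    hS_int.mono' ((hφmeas a).comp (hmeas _)).aestronglyMeasurable
      (Filter.Eventually.of_forall fun ω => by
        simpa [Real.norm_eq_abs] using hφ_bound a ω)
  have hφ_sq_int : ∀ a, Integrable (fun ω => φ a (x0 ω) ^ 2) μ := fun a => by
    refine hL4'.mono' (((hφmeas a).comp (hmeas _)).pow_const 2).aestronglyMeasurable
      (Filter.Eventually.of_forall fun ω => ?_)
    have h := hφ_bound a ω
    have h0 := abs_nonneg (φ a (x0 ω))
    simp only [Real.norm_eq_abs]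
    rw [abs_of_nonneg (sq_nonneg _), ← sq_abs]
    nlinarith
  have hxx_int : ∀ a b, Integrable (fun ω => x0 ω a * x0 ω b) μ := fun a b => by
    refine hS_int.mono' (((hmeas _).eval).mul ((hmeas _).eval)).aestronglyMeasurable
      (Filter.Eventually.of_forall fun ω => ?_)
    have h1 := hsq_le_S ω a; have h2 := hsq_le_S ω b
    simp only [Real.norm_eq_abs]
    rw [abs_mul]
    nlinarith [abs_nonneg (x0 ω a), abs_nonneg (x0 ω b), sq_abs (x0 ω a),
      sq_abs (x0 ω b), sq_nonneg (|x0 ω a| - |x0 ω b|)]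
  have hCu : ∀ a, (∑ b, C a b * u j b) = lam j * u j a := by
    intro a
    have h := congrFun (hueig j) a
    simpa [Matrix.mulVec, dotProduct] using h
  have hφ_integral : ∀ a, ∫ ω, φ a (x0 ω) ∂μ = lam j * u j a := by
    intro a
    have h1 : (fun ω => φ a (x0 ω)) = fun ω => ∑ b, (x0 ω a * x0 ω b) * u j b := by
      funext ω
      show x0 ω a * ∑ b, x0 ω b * u j b = _
      rw [Finset.mul_sum]
      exact Finset.sum_congr rfl fun b _ => by ring
    rw [h1, integral_finset_sum _ (fun b _ => (hxx_int a b).mul_const _)]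
    have h2 : ∀ b : Fin n, ∫ ω, (x0 ω a * x0 ω b) * u j b ∂μ = C a b * u j b := fun b => by
      rw [integral_mul_const, ← hC a b]
    simp_rw [h2]
    exact hCu a
  have hψ_int : ∀ a, Integrable (fun ω => ψ a (x0 ω)) μ := fun a =>
    (hφ_int a).sub (integrable_const _)
  have hψ_integral : ∀ a, ∫ ω, ψ a (x0 ω) ∂μ = 0 := fun a => by
    show ∫ ω, (φ a (x0 ω) - lam j * u j a) ∂μ = 0
    rw [integral_sub (hφ_int a) (integrable_const _), hφ_integral a, integral_const]
    simp
  have hψexp : ∀ (v : Fin n → ℝ) a, ψ a v ^ 2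
      = φ a v ^ 2 - 2 * (lam j * u j a) * φ a v + (lam j * u j a) ^ 2 := by
    intro v a; show (φ a v - lam j * u j a) ^ 2 = _; ring
  have hψ_sq_int : ∀ a, Integrable (fun ω => ψ a (x0 ω) ^ 2) μ := fun a => by
    simp_rw [hψexp]
    exact ((hφ_sq_int a).sub ((hφ_int a).const_mul _)).add (integrable_const _)
  have hψ_sq_integral : ∀ a, ∫ ω, ψ a (x0 ω) ^ 2 ∂μ
      = ∫ ω, φ a (x0 ω) ^ 2 ∂μ - (lam j * u j a) ^ 2 := fun a => by
    simp_rw [hψexp]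
    have hi1 : Integrable (fun ω => φ a (x0 ω) ^ 2 - 2 * (lam j * u j a) * φ a (x0 ω)) μ :=
      (hφ_sq_int a).sub ((hφ_int a).const_mul _)
    rw [integral_add hi1 (integrable_const _),
      integral_sub (hφ_sq_int a) ((hφ_int a).const_mul _), integral_const_mul,
      hφ_integral a, integral_const]
    simp only [measure_univ, ENNReal.toReal_one, probReal_univ, one_smul]
    ring
  set V : ℝ := ∑ a, ∫ ω, ψ a (x0 ω) ^ 2 ∂μ with hVdef
  have hV_nonneg : 0 ≤ V :=
    Finset.sum_nonneg fun a _ => integral_nonneg fun ω => sq_nonneg _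
  have hkjV : kj ^ 2 = V := by
    have hpt : ∀ ω, (∑ a, ((vecMulVec (x0 ω) (x0 ω)).mulVec (u j) a) ^ 2)
        = ∑ a, φ a (x0 ω) ^ 2 := by
      intro ω; refine Finset.sum_congr rfl fun a _ => ?_
      congr 1
      show ∑ b, (x0 ω a * x0 ω b) * u j b = x0 ω a * ∑ b, x0 ω b * u j b
      rw [Finset.mul_sum]
      exact Finset.sum_congr rfl fun b _ => by ring
    have hint : (∫ ω, ∑ a, ((vecMulVec (x0 ω) (x0 ω)).mulVec (u j) a) ^ 2 ∂μ)
        = ∑ a, ∫ ω, φ a (x0 ω) ^ 2 ∂μ := by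
      simp_rw [hpt]
      exact integral_finset_sum _ fun a _ => hφ_sq_int a
    have hVeq : V = (∫ ω, ∑ a, ((vecMulVec (x0 ω) (x0 ω)).mulVec (u j) a) ^ 2 ∂μ)
        - lam j ^ 2 := by
      rw [hint, hVdef]
      simp_rw [hψ_sq_integral]
      rw [Finset.sum_sub_distrib]
      congr 1
      have h3 : ∑ a, (lam j * u j a) ^ 2 = lam j ^ 2 * ∑ a, u j a ^ 2 := by
        rw [Finset.mul_sum]; exact Finset.sum_congr rfl fun a _ => by ring
      rw [h3, hunorm, mul_one]
    rw [hkj, ← hVeq, Real.sq_sqrt hV_nonneg]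
  -- transfer to each sample
  have hid : ∀ (p : Fin m) (g : (Fin n → ℝ) → ℝ), Measurable g →
      IdentDistrib (fun ω => g (x p ω)) (fun ω => g (x0 ω)) μ μ :=
    fun p g hg => (hident p).comp hg
  have hψ_int_p : ∀ p a, Integrable (fun ω => ψ a (x p ω)) μ := fun p a =>
    ((hid p (ψ a) (hψmeas a)).integrable_iff).mpr (hψ_int a)
  have hψ_integral_p : ∀ p a, ∫ ω, ψ a (x p ω) ∂μ = 0 := fun p a => by
    rw [(hid p (ψ a) (hψmeas a)).integral_eq]; exact hψ_integral a
  have hψ_sq_int_p : ∀ p a, Integrable (fun ω => ψ a (x p ω) ^ 2) μ := fun p a =>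
    ((hid p (fun v => ψ a v ^ 2) ((hψmeas a).pow_const 2)).integrable_iff).mpr (hψ_sq_int a)
  have hψ_sq_integral_p : ∀ p a, ∫ ω, ψ a (x p ω) ^ 2 ∂μ = ∫ ω, ψ a (x0 ω) ^ 2 ∂μ :=
    fun p a => (hid p (fun v => ψ a v ^ 2) ((hψmeas a).pow_const 2)).integral_eq
  have hterm_int : ∀ (a : Fin n) (p q : Fin m),
      Integrable (fun ω => ψ a (x p ω) * ψ a (x q ω)) μ := by
    intro a p q
    rcases eq_or_ne p q with rfl | hpq
    · simpa [pow_two] using hψ_sq_int_p p a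
    · have hI : IndepFun (fun ω => ψ a (x p ω)) (fun ω => ψ a (x q ω)) μ :=
        (hindep.indepFun hpq).comp (hψmeas a) (hψmeas a)
      exact hI.integrable_mul (hψ_int_p p a) (hψ_int_p q a)
  have hterm_integral : ∀ (a : Fin n) (p q : Fin m), p ≠ q →
      ∫ ω, ψ a (x p ω) * ψ a (x q ω) ∂μ = 0 := by
    intro a p q hpq
    have hI : IndepFun (fun ω => ψ a (x p ω)) (fun ω => ψ a (x q ω)) μ :=
      (hindep.indepFun hpq).comp (hψmeas a) (hψmeas a)
    have h := hI.integral_fun_mul_eq_mul_integral ((hψmeas a).comp (hmeas p)).aestronglyMeasurable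
      ((hψmeas a).comp (hmeas q)).aestronglyMeasurable
    calc ∫ ω, ψ a (x p ω) * ψ a (x q ω) ∂μ
        = (∫ ω, ψ a (x p ω) ∂μ) * ∫ ω, ψ a (x q ω) ∂μ := h
      _ = 0 := by rw [hψ_integral_p p a, zero_mul]
  -- the function f ω = ‖(Ĉ(ω) - C) u_j‖²
  set f : Ω → ℝ := fun ω => ∑ a, ((Chat ω).mulVec (u j) a - lam j * u j a) ^ 2 with hfdef
  have hf_nonneg : ∀ ω, 0 ≤ f ω := fun ω => Finset.sum_nonneg fun a _ => sq_nonneg _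
  have hChatcomp : ∀ ω a, (Chat ω).mulVec (u j) a = (m:ℝ)⁻¹ * ∑ p, φ a (x p ω) := by
    intro ω a
    rw [hChat]
    show ∑ b, ((m:ℝ)⁻¹ • ∑ p, vecMulVec (x p ω) (x p ω)) a b * u j b
      = (m:ℝ)⁻¹ * ∑ p, x p ω a * ∑ b, x p ω b * u j b
    simp only [Matrix.smul_apply, Matrix.sum_apply, Matrix.vecMulVec_apply, smul_eq_mul]
    rw [Finset.mul_sum]
    simp only [Finset.sum_mul, Finset.mul_sum]
    rw [Finset.sum_comm]
    refine Finset.sum_congr rfl fun p _ => Finset.sum_congr rfl fun b _ => by ring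
  have hdiff : ∀ ω a, (Chat ω).mulVec (u j) a - lam j * u j a
      = (m:ℝ)⁻¹ * ∑ p, ψ a (x p ω) := by
    intro ω a
    rw [hChatcomp ω a]
    show _ = (m:ℝ)⁻¹ * ∑ p, (φ a (x p ω) - lam j * u j a)
    rw [Finset.sum_sub_distrib, Finset.sum_const, Finset.card_univ, Fintype.card_fin,
      mul_sub, nsmul_eq_mul, ← mul_assoc, inv_mul_cancel₀ (ne_of_gt hmR), one_mul]
  have hf_eq : f = fun ω =>
      ((m:ℝ)⁻¹) ^ 2 * ∑ a, ∑ p, ∑ q, ψ a (x p ω) * ψ a (x q ω) := by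
    funext ω
    show ∑ a, ((Chat ω).mulVec (u j) a - lam j * u j a) ^ 2 = _
    simp_rw [hdiff ω]
    rw [Finset.mul_sum]
    refine Finset.sum_congr rfl fun a _ => ?_
    rw [mul_pow, pow_two (∑ p, ψ a (x p ω)), Finset.sum_mul_sum]
  have hf_int : Integrable f μ := by
    rw [hf_eq]
    exact (integrable_finset_sum _ fun a _ => integrable_finset_sum _ fun p _ =>
      integrable_finset_sum _ fun q _ => hterm_int a p q).const_mul _
  have hf_integral : ∫ ω, f ω ∂μ = (m:ℝ)⁻¹ * V := by
    rw [hf_eq]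
    rw [integral_const_mul]
    rw [integral_finset_sum _ (fun a _ => integrable_finset_sum _ fun p _ =>
      integrable_finset_sum _ fun q _ => hterm_int a p q)]
    have h1 : ∀ a : Fin n, ∫ ω, ∑ p, ∑ q, ψ a (x p ω) * ψ a (x q ω) ∂μ
        = (m : ℝ) * ∫ ω, ψ a (x0 ω) ^ 2 ∂μ := by
      intro a
      rw [integral_finset_sum _ (fun p _ => integrable_finset_sum _ fun q _ => hterm_int a p q)]
      have h2 : ∀ p : Fin m, ∫ ω, ∑ q, ψ a (x p ω) * ψ a (x q ω) ∂μ
          = ∫ ω, ψ a (x0 ω) ^ 2 ∂μ := by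
        intro p
        rw [integral_finset_sum _ (fun q _ => hterm_int a p q)]
        rw [Finset.sum_eq_single p]
        · rw [show (fun ω => ψ a (x p ω) * ψ a (x p ω)) = fun ω => ψ a (x p ω) ^ 2 from
            funext fun ω => (sq _).symm]
          exact hψ_sq_integral_p p a
        · intro q _ hqp; exact hterm_integral a p q (Ne.symm hqp)
        · intro h; exact absurd (Finset.mem_univ p) h
      simp_rw [h2]
      rw [Finset.sum_const, Finset.card_univ, Fintype.card_fin, nsmul_eq_mul]
    simp_rw [h1]
    rw [← Finset.mul_sum, ← hVdef]
    rw [← mul_assoc]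
    congr 1
    rw [pow_two, mul_assoc, inv_mul_cancel₀ (ne_of_gt hmR), mul_one]
  -- the event inclusion
  set ε : ℝ := t ^ 2 * D ^ 2 / 4 with hεdef
  have hε_pos : 0 < ε := by positivity
  have hsub : {ω | Real.sign D * (2 * lamhat i ω) > Real.sign D * (lam i + lam j)
      ∧ t ≤ |∑ a, uhat i ω a * u j a|} ⊆ {ω | ε ≤ f ω} := by
    rintro ω ⟨hsign, hc⟩
    set c : ℝ := ∑ a, uhat i ω a * u j a with hcdef
    set L : ℝ := lamhat i ω with hLdef
    have hL : D ^ 2 / 4 < (L - lam j) ^ 2 := eigvec_aux_sq hDdef hD0 hsign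
    have hsym : ∀ a b, Chat ω a b = Chat ω b a := by
      intro a b
      rw [hChat]
      simp only [Matrix.smul_apply, Matrix.sum_apply, Matrix.vecMulVec_apply, smul_eq_mul]
      congr 1
      exact Finset.sum_congr rfl fun p _ => mul_comm _ _
    have hunit : ∑ a, uhat i ω a ^ 2 = 1 := by
      have := huhatortho ω i i; simpa [sq] using this
    have h1 : ∑ a, uhat i ω a * (Chat ω).mulVec (u j) a = L * c := by
      have e1 : ∀ a, (Chat ω).mulVec (u j) a = ∑ b, Chat ω a b * u j b := fun a => rfl
      calc ∑ a, uhat i ω a * (Chat ω).mulVec (u j) a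
          = ∑ a, ∑ b, uhat i ω a * (Chat ω a b * u j b) := by
            simp_rw [e1, Finset.mul_sum]
        _ = ∑ b, ∑ a, uhat i ω a * (Chat ω a b * u j b) := Finset.sum_comm
        _ = ∑ b, (∑ a, Chat ω b a * uhat i ω a) * u j b := by
            refine Finset.sum_congr rfl fun b _ => ?_
            rw [Finset.sum_mul]
            refine Finset.sum_congr rfl fun a _ => ?_
            rw [hsym a b]; ring
        _ = ∑ b, ((Chat ω).mulVec (uhat i ω) b) * u j b := rfl
        _ = ∑ b, (L * uhat i ω b) * u j b := by
            refine Finset.sum_congr rfl fun b _ => ?_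
            rw [huhateig ω i]
            rfl
        _ = L * c := by
            rw [hcdef, Finset.mul_sum]
            exact Finset.sum_congr rfl fun b _ => by ring
    have hkey : ∑ a, uhat i ω a * ((Chat ω).mulVec (u j) a - lam j * u j a)
        = (L - lam j) * c := by
      simp_rw [mul_sub]
      rw [Finset.sum_sub_distrib, h1]
      have h2 : ∑ a, uhat i ω a * (lam j * u j a) = lam j * c := by
        rw [hcdef, Finset.mul_sum]
        exact Finset.sum_congr rfl fun a _ => by ring
      rw [h2]; ring
    have hCS : ((L - lam j) * c) ^ 2 ≤ f ω := by
      have hcs2 := Finset.sum_mul_sq_le_sq_mul_sq Finset.univ (fun a => uhat i ω a)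
        (fun a => (Chat ω).mulVec (u j) a - lam j * u j a)
      rw [hkey] at hcs2
      rw [hunit, one_mul] at hcs2
      exact hcs2
    show ε ≤ f ω
    have hc2 : t ^ 2 ≤ c ^ 2 := by nlinarith [sq_abs c, abs_nonneg c]
    have hmm : t ^ 2 * (D ^ 2 / 4) ≤ c ^ 2 * (L - lam j) ^ 2 :=
      mul_le_mul hc2 hL.le (by positivity) (sq_nonneg c)
    calc ε = t ^ 2 * (D ^ 2 / 4) := by rw [hεdef]; ring
      _ ≤ c ^ 2 * (L - lam j) ^ 2 := hmm
      _ = ((L - lam j) * c) ^ 2 := by ring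
      _ ≤ f ω := hCS
  -- Markov's inequality and conclusion
  have hmark := mul_meas_ge_le_integral_of_nonneg (μ := μ)
    (Filter.Eventually.of_forall hf_nonneg) hf_int ε
  have hmono : (μ {ω | Real.sign D * (2 * lamhat i ω) > Real.sign D * (lam i + lam j)
      ∧ t ≤ |∑ a, uhat i ω a * u j a|}).toReal ≤ (μ {ω | ε ≤ f ω}).toReal :=
    ENNReal.toReal_mono (measure_ne_top μ _) (measure_mono hsub)
  have hfinal : (μ {ω | ε ≤ f ω}).toReal ≤ (m:ℝ)⁻¹ * V / ε := by
    rw [le_div_iff₀ hε_pos]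
    calc (μ {ω | ε ≤ f ω}).toReal * ε = ε * (μ {ω | ε ≤ f ω}).toReal := mul_comm _ _
      _ ≤ ∫ ω, f ω ∂μ := hmark
      _ = (m:ℝ)⁻¹ * V := hf_integral
  have hRHS : (m:ℝ)⁻¹ * (2 * kj / (t * |D|)) ^ 2 = (m:ℝ)⁻¹ * V / ε := by
    rw [hεdef, div_pow, mul_pow, mul_pow, sq_abs, hkjV]
    have htD : t ^ 2 * D ^ 2 ≠ 0 := by positivity
    field_simp
    ring
  calc (μ {ω | Real.sign D * (2 * lamhat i ω) > Real.sign D * (lam i + lam j)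
        ∧ t ≤ |∑ a, uhat i ω a * u j a|}).toReal
      ≤ (μ {ω | ε ≤ f ω}).toReal := hmono
    _ ≤ (m:ℝ)⁻¹ * V / ε := hfinal
    _ = (m:ℝ)⁻¹ * (2 * kj / (t * |D|)) ^ 2 := hRHS.symm
end

section
/- Let x_1,…,x_m be i.i.d. random vectors in ℝ^n on a probability space, with mean zero, covariance matrix C = E[x x^T], and E[‖x‖₂⁴] < ∞. Let Ĉ = (1/m) Σ_{p=1}^m x_p x_p^T, let u_1,…,u_n be an orthonormal basis of eigenvectors of C with eigenvalues λ_1 ≥ … ≥ λ_n, and let ω ↦ (û_1(ω),…,û_n(ω)) be a measurable choice of an orthonormal basis of eigenvectors of Ĉ(ω) with eigenvalues λ̂_1(ω) ≥ … ≥ λ̂_n(ω). Let w_{ij} ≥ 0 (for i ≠ j) be nonnegative weights such that w_{ij} = 0 whenever λ_i = λ_j, set k_j = (E[‖x x^T u_j‖₂²] − λ_j²)^{1/2}, and let E be the event that sign(λ_i − λ_j)·2λ̂_i > sign(λ_i − λ_j)·(λ_i + λ_j) for every pair (i,j) with w_{ij} ≠ 0. Then for every t > 0, P( E ∩ {Σ_{i≠j}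 w_{ij} ⟨û_i, u_j⟩² > t} ) ≤ Σ_{i≠j} 4 w_{ij} k_j² / (m·t·(λ_i − λ_j)²). -/
open Matrix Finset MeasureTheory ProbabilityTheory

lemma variance_step {Ω : Type*} [MeasurableSpace Ω]
    (μ : Measure Ω) [IsProbabilityMeasure μ]
    {n m : ℕ} (hm : 0 < m)
    (x : Fin m → Ω → Fin n → ℝ)
    (hmeas : ∀ p, Measurable (x p))
    (hindep : iIndepFun x μ)
    (hident : ∀ p, IdentDistrib (x p) (x ⟨0, hm⟩) μ μ)
    (hL4 : Integrable (fun ω => (∑ a, x ⟨0, hm⟩ ω a ^ 2) ^ 2) μ)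
    (v : Fin n → ℝ) (hv : ∑ a, v a ^ 2 = 1)
    (c : Fin n → ℝ)
    (hc : ∀ a, ∫ ω, (∑ b, x ⟨0, hm⟩ ω b * v b) * x ⟨0, hm⟩ ω a ∂μ = c a) :
    Integrable (fun ω => ∑ a,
      ((m:ℝ)⁻¹ * (∑ p, (∑ b, x p ω b * v b) * x p ω a) - c a) ^ 2) μ
    ∧ (∫ ω, ∑ a,
        ((m:ℝ)⁻¹ * (∑ p, (∑ b, x p ω b * v b) * x p ω a) - c a) ^ 2 ∂μ)
      = (m:ℝ)⁻¹ * ((∫ ω, ∑ a, ((∑ b, x ⟨0, hm⟩ ω b * v b) * x ⟨0, hm⟩ ω a) ^ 2 ∂μ)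
          - ∑ a, c a ^ 2)
    ∧ 0 ≤ (∫ ω, ∑ a, ((∑ b, x ⟨0, hm⟩ ω b * v b) * x ⟨0, hm⟩ ω a) ^ 2 ∂μ)
          - ∑ a, c a ^ 2 := by
  have hm0 : (m:ℝ) ≠ 0 := Nat.cast_ne_zero.mpr hm.ne'
  set p0 : Fin m := ⟨0, hm⟩ with hp0
  set y : Fin m → Ω → Fin n → ℝ := fun p ω a => (∑ b, x p ω b * v b) * x p ω a with hy
  set z : Fin m → Ω → Fin n → ℝ := fun p ω a => y p ω a - c a with hz
  set N : Fin m → Ω → ℝ := fun p ω => ∑ a, x p ω a ^ 2 with hN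
  have hxa : ∀ p a, Measurable (fun ω => x p ω a) :=
    fun p a => (measurable_pi_apply a).comp (hmeas p)
  have hymeas : ∀ p a, Measurable (fun ω => y p ω a) := fun p a =>
    ((Finset.measurable_sum _ fun b _ => (hxa p b).mul_const (v b))).mul (hxa p a)
  have hzmeas : ∀ p a, Measurable (fun ω => z p ω a) := fun p a =>
    (hymeas p a).sub measurable_const
  have hNmeas : ∀ p, Measurable (N p) := fun p =>
    Finset.measurable_sum _ fun a _ => (hxa p a).pow measurable_const
  have hNnonneg : ∀ p ω, 0 ≤ N p ω := fun p ω =>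
    Finset.sum_nonneg fun a _ => sq_nonneg _
  have hy_abs : ∀ p ω a, |y p ω a| ≤ N p ω := by
    intro p ω a
    have h1 : (∑ b, x p ω b * v b) ^ 2 ≤ N p ω := by
      have := Finset.sum_mul_sq_le_sq_mul_sq Finset.univ (x p ω) v
      simpa [hv] using this
    have h2 : (x p ω a) ^ 2 ≤ N p ω :=
      Finset.single_le_sum (f := fun b => x p ω b ^ 2)
        (fun b _ => sq_nonneg _) (Finset.mem_univ a)
    have h3 : (y p ω a) ^ 2 ≤ N p ω ^ 2 := by
      have := mul_le_mul h1 h2 (sq_nonneg _) (hNnonneg p ω)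
      calc (y p ω a) ^ 2 = (∑ b, x p ω b * v b) ^ 2 * (x p ω a) ^ 2 := by ring
        _ ≤ N p ω * N p ω := this
        _ = N p ω ^ 2 := (sq _).symm
    nlinarith [abs_nonneg (y p ω a), sq_abs (y p ω a), hNnonneg p ω]
  -- integrability of N and N^2
  have hNid : ∀ p, IdentDistrib (N p) (N p0) μ μ := fun p =>
    (hident p).comp (Finset.measurable_sum _ fun a _ =>
      (measurable_pi_apply a).pow measurable_const)
  have hN2id : ∀ p, IdentDistrib (fun ω => N p ω ^ 2) (fun ω => N p0 ω ^ 2) μ μ := fun p =>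
    (hNid p).comp (measurable_id.pow measurable_const)
  have hN2int0 : Integrable (fun ω => N p0 ω ^ 2) μ := hL4
  have hNint0 : Integrable (N p0) μ := by
    refine ((integrable_const (1:ℝ)).add hN2int0).mono' (hNmeas p0).aestronglyMeasurable ?_
    filter_upwards with ω
    have h := hNnonneg p0 ω
    rw [Real.norm_eq_abs, abs_of_nonneg h]
    simp only [Pi.add_apply]
    nlinarith [sq_nonneg (N p0 ω - 1)]
  have hNint : ∀ p, Integrable (N p) μ := fun p => (hNid p).integrable_iff.mpr hNint0
  have hN2int : ∀ p, Integrable (fun ω => N p ω ^ 2) μ := fun p =>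
    (hN2id p).integrable_iff.mpr hN2int0
  -- integrability of z and z^2
  have hzint : ∀ p a, Integrable (fun ω => z p ω a) μ := by
    intro p a
    refine ((hNint p).add (integrable_const |c a|)).mono'
      (hzmeas p a).aestronglyMeasurable ?_
    filter_upwards with ω
    rw [Real.norm_eq_abs]
    calc |z p ω a| ≤ |y p ω a| + |c a| := abs_sub _ _
      _ ≤ N p ω + |c a| := by linarith [hy_abs p ω a]
  have hyint : ∀ p a, Integrable (fun ω => y p ω a) μ := by
    intro p a
    have : (fun ω => y p ω a) = fun ω => z p ω a + c a := by
      funext ω; simp [hz]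
    rw [this]
    exact (hzint p a).add (integrable_const _)
  have hz2int : ∀ p a, Integrable (fun ω => z p ω a ^ 2) μ := by
    intro p a
    refine (((hN2int p).add ((hNint p).const_mul (2 * |c a|))).add
      (integrable_const (|c a| ^ 2))).mono'
      ((hzmeas p a).pow measurable_const).aestronglyMeasurable ?_
    filter_upwards with ω
    rw [Real.norm_eq_abs, abs_of_nonneg (sq_nonneg _)]
    have h1 : |z p ω a| ≤ N p ω + |c a| := by
      calc |z p ω a| ≤ |y p ω a| + |c a| := abs_sub _ _
        _ ≤ N p ω + |c a| := by linarith [hy_abs p ω a]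
    have h2 : z p ω a ^ 2 ≤ (N p ω + |c a|) ^ 2 := by
      nlinarith [abs_nonneg (z p ω a), sq_abs (z p ω a)]
    have h3 : (N p ω + |c a|) ^ 2 = N p ω ^ 2 + 2 * |c a| * N p ω + |c a| ^ 2 := by ring
    simp only [Pi.add_apply]
    linarith
  -- integrability of products
  have hzid : ∀ p a, IdentDistrib (fun ω => z p ω a) (fun ω => z p0 ω a) μ μ := by
    intro p a
    exact (hident p).comp (show Measurable (fun ξ : Fin n → ℝ => (∑ b, ξ b * v b) * ξ a - c a) by
      exact (((Finset.measurable_sum _ fun b _ => (show Measurable (fun ξ : Fin n → ℝ => ξ b) from measurable_pi_apply b).mul_const (v b))).mul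
        (measurable_pi_apply a)).sub measurable_const)
  have hzindep : ∀ a, ∀ p q, p ≠ q →
      IndepFun (fun ω => z p ω a) (fun ω => z q ω a) μ := by
    intro a p q hpq
    have : IndepFun (x p) (x q) μ := hindep.indepFun hpq
    exact this.comp
      (show Measurable (fun ξ : Fin n → ℝ => (∑ b, ξ b * v b) * ξ a - c a) by
        exact (((Finset.measurable_sum _ fun b _ => (show Measurable (fun ξ : Fin n → ℝ => ξ b) from measurable_pi_apply b).mul_const (v b))).mul
          (measurable_pi_apply a)).sub measurable_const)
      (show Measurable (fun ξ : Fin n → ℝ => (∑ b, ξ b * v b) * ξ a - c a) by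
        exact (((Finset.measurable_sum _ fun b _ => (show Measurable (fun ξ : Fin n → ℝ => ξ b) from measurable_pi_apply b).mul_const (v b))).mul
          (measurable_pi_apply a)).sub measurable_const)
  have hzzint : ∀ a p q, Integrable (fun ω => z p ω a * z q ω a) μ := by
    intro a p q
    rcases eq_or_ne p q with rfl | hpq
    · have := hz2int p a
      simpa [sq] using this
    · have := (hzindep a p q hpq).integrable_mul (hzint p a) (hzint q a)
      exact this
  -- mean zero
  have hzmean : ∀ p a, ∫ ω, z p ω a ∂μ = 0 := by
    intro p a
    rw [(hzid p a).integral_eq]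
    have : ∫ ω, z p0 ω a ∂μ = (∫ ω, y p0 ω a ∂μ) - ∫ _ω, c a ∂μ :=
      integral_sub (hyint p0 a) (integrable_const _)
    rw [this, integral_const]
    simp [hc a, hy]
  have hcross : ∀ a p q, p ≠ q → ∫ ω, z p ω a * z q ω a ∂μ = 0 := by
    intro a p q hpq
    have h : ∫ ω, z p ω a * z q ω a ∂μ = (∫ ω, z p ω a ∂μ) * ∫ ω, z q ω a ∂μ :=
      (hzindep a p q hpq).integral_mul_eq_mul_integral (hzint p a).1 (hzint q a).1
    rw [h, hzmean, hzmean, mul_zero]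
  -- pointwise identity
  have hpt : ∀ ω, (∑ a, ((m:ℝ)⁻¹ * (∑ p, y p ω a) - c a) ^ 2)
      = (m:ℝ)⁻¹ ^ 2 * ∑ a, ∑ p, ∑ q, z p ω a * z q ω a := by
    intro ω
    rw [Finset.mul_sum]
    refine Finset.sum_congr rfl fun a _ => ?_
    have h1 : (m:ℝ)⁻¹ * (∑ p, y p ω a) - c a = (m:ℝ)⁻¹ * ∑ p, z p ω a := by
      have : ∑ p, z p ω a = (∑ p, y p ω a) - m * c a := by
        rw [Finset.sum_sub_distrib]
        simp [Finset.card_univ, mul_comm]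
      rw [this, mul_sub]
      field_simp
    rw [h1, mul_pow, sq (∑ p, z p ω a), Finset.sum_mul_sum]
  -- integrability of main function
  have hint : Integrable (fun ω => ∑ a, ((m:ℝ)⁻¹ * (∑ p, y p ω a) - c a) ^ 2) μ := by
    have : Integrable (fun ω => (m:ℝ)⁻¹ ^ 2 * ∑ a, ∑ p, ∑ q, z p ω a * z q ω a) μ := by
      refine Integrable.const_mul ?_ _
      refine integrable_finset_sum _ fun a _ => ?_
      refine integrable_finset_sum _ fun p _ => ?_
      exact integrable_finset_sum _ fun q _ => hzzint a p q
    exact this.congr (Filter.Eventually.of_forall fun ω => (hpt ω).symm)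
  have heq : (∫ ω, ∑ a, ((m:ℝ)⁻¹ * (∑ p, y p ω a) - c a) ^ 2 ∂μ)
      = (m:ℝ)⁻¹ * ((∫ ω, ∑ a, y p0 ω a ^ 2 ∂μ) - ∑ a, c a ^ 2) := by
    have hI : (∫ ω, ∑ a, ((m:ℝ)⁻¹ * (∑ p, y p ω a) - c a) ^ 2 ∂μ)
        = (m:ℝ)⁻¹ ^ 2 * ∑ a, ∑ p, ∑ q, ∫ ω, z p ω a * z q ω a ∂μ := by
      rw [integral_congr_ae (Filter.Eventually.of_forall hpt), integral_const_mul]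
      congr 1
      rw [integral_finset_sum _ fun a _ => integrable_finset_sum _ fun p _ =>
        integrable_finset_sum _ fun q _ => hzzint a p q]
      refine Finset.sum_congr rfl fun a _ => ?_
      rw [integral_finset_sum _ fun p _ => integrable_finset_sum _ fun q _ => hzzint a p q]
      refine Finset.sum_congr rfl fun p _ => ?_
      rw [integral_finset_sum _ fun q _ => hzzint a p q]
    have hdiag : ∀ a p, (∑ q, ∫ ω, z p ω a * z q ω a ∂μ) = ∫ ω, z p0 ω a ^ 2 ∂μ := by
      intro a p
      rw [Finset.sum_eq_single p (fun q _ hqp => hcross a p q (Ne.symm hqp)) (by simp)]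
      have h1 : (fun ω => z p ω a * z p ω a) = fun ω => z p ω a ^ 2 := by
        funext ω; ring
      rw [h1]
      exact ((hzid p a).comp (measurable_id.pow measurable_const)).integral_eq
    have hV : (∑ a, ∑ p, ∑ q, ∫ ω, z p ω a * z q ω a ∂μ)
        = m * ∑ a, ∫ ω, z p0 ω a ^ 2 ∂μ := by
      rw [Finset.mul_sum]
      refine Finset.sum_congr rfl fun a _ => ?_
      rw [Finset.sum_congr rfl fun p _ => hdiag a p]
      simp [Finset.card_univ, mul_comm]
    have hVexp : (∑ a, ∫ ω, z p0 ω a ^ 2 ∂μ)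
        = (∫ ω, ∑ a, y p0 ω a ^ 2 ∂μ) - ∑ a, c a ^ 2 := by
      have hy2int : ∀ a, Integrable (fun ω => y p0 ω a ^ 2) μ := by
        intro a
        refine (hN2int p0).mono' ((hymeas p0 a).pow measurable_const).aestronglyMeasurable ?_
        filter_upwards with ω
        rw [Real.norm_eq_abs, abs_of_nonneg (sq_nonneg _)]
        nlinarith [hy_abs p0 ω a, abs_nonneg (y p0 ω a), sq_abs (y p0 ω a), hNnonneg p0 ω]
      have h1 : ∀ a, ∫ ω, z p0 ω a ^ 2 ∂μ
          = (∫ ω, y p0 ω a ^ 2 ∂μ) - c a ^ 2 := by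
        intro a
        have hz2 : ∀ ω, z p0 ω a ^ 2
            = y p0 ω a ^ 2 - (2 * c a) * y p0 ω a + c a ^ 2 := by
          intro ω; simp only [hz]; ring
        rw [integral_congr_ae (Filter.Eventually.of_forall hz2)]
        have hA : Integrable (fun ω => y p0 ω a ^ 2 - 2 * c a * y p0 ω a) μ := by
          exact (hy2int a).sub ((hyint p0 a).const_mul _)
        rw [integral_add hA (integrable_const _),
          integral_sub (hy2int a) ((hyint p0 a).const_mul _), integral_const_mul,
          integral_const]
        have := hc a
        simp only [hy] at this ⊢
        rw [this]
        simp; ring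
      rw [Finset.sum_congr rfl fun a _ => h1 a, Finset.sum_sub_distrib,
        integral_finset_sum _ fun a _ => hy2int a]
    rw [hI, hV, hVexp]
    have : ((m:ℝ)⁻¹) ^ 2 * (m * ((∫ ω, ∑ a, y p0 ω a ^ 2 ∂μ) - ∑ a, c a ^ 2))
        = (m:ℝ)⁻¹ * ((∫ ω, ∑ a, y p0 ω a ^ 2 ∂μ) - ∑ a, c a ^ 2) := by
      field_simp
    rw [this]
  refine ⟨hint, heq, ?_⟩
  have hnn : 0 ≤ ∫ ω, ∑ a, ((m:ℝ)⁻¹ * (∑ p, y p ω a) - c a) ^ 2 ∂μ :=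
    integral_nonneg fun ω => Finset.sum_nonneg fun a _ => sq_nonneg _
  rw [heq] at hnn
  by_contra h
  push_neg at h
  have hmpos : (0:ℝ) < (m:ℝ)⁻¹ := by positivity
  nlinarith
/-- (Corollary 1 of the paper.) In the setting of i.i.d. mean-zero
samples with covariance `C`, sample covariance `Ĉ`, orthonormal eigenpairs `(u, λ)`
of `C` (nonincreasing) and measurable eigenpairs `(û(ω), λ̂(ω))` of `Ĉ(ω)`
(nonincreasing): for nonnegative weights `w i j` (for `i ≠ j`) vanishing whenever
`λ_i = λ_j`, and the event `E` that the sign condition holds for every pair with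
`w i j ≠ 0`, for every `t > 0`:
`P(E ∩ {∑_{i≠j} w i j ⟨û_i, u_j⟩² > t}) ≤ ∑_{i≠j} 4 w i j k_j² / (m t (λ_i - λ_j)²)`. -/
theorem weighted_angle_sum_concentration {Ω : Type*} [MeasurableSpace Ω]
    (μ : Measure Ω) [IsProbabilityMeasure μ]
    {n m : ℕ} (hm : 0 < m)
    (x : Fin m → Ω → Fin n → ℝ)
    (hmeas : ∀ p, Measurable (x p))
    (hindep : iIndepFun x μ)
    (hident : ∀ p, IdentDistrib (x p) (x ⟨0, hm⟩) μ μ)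
    (hmean : ∀ a, ∫ ω, x ⟨0, hm⟩ ω a ∂μ = 0)
    (C : Matrix (Fin n) (Fin n) ℝ)
    (hC : ∀ a b, C a b = ∫ ω, x ⟨0, hm⟩ ω a * x ⟨0, hm⟩ ω b ∂μ)
    (hL4 : Integrable (fun ω => (∑ a, x ⟨0, hm⟩ ω a ^ 2) ^ 2) μ)
    (Chat : Ω → Matrix (Fin n) (Fin n) ℝ)
    (hChat : ∀ ω, Chat ω = (m : ℝ)⁻¹ • ∑ p, vecMulVec (x p ω) (x p ω))
    (u : Fin n → Fin n → ℝ) (lam : Fin n → ℝ) (hlam : Antitone lam)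
    (huortho : ∀ k l, ∑ a, u k a * u l a = if k = l then 1 else 0)
    (hueig : ∀ k, C.mulVec (u k) = lam k • u k)
    (uhat : Fin n → Ω → Fin n → ℝ) (lamhat : Fin n → Ω → ℝ)
    (huhatmeas : ∀ k, Measurable (uhat k))
    (hlamhatmeas : ∀ k, Measurable (lamhat k))
    (huhatortho : ∀ ω k l, ∑ a, uhat k ω a * uhat l ω a = if k = l then 1 else 0)
    (huhateig : ∀ ω k, (Chat ω).mulVec (uhat k ω) = lamhat k ω • uhat k ω)
    (hlamhatmono : ∀ ω, Antitone (fun k => lamhat k ω))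
    (w : Fin n → Fin n → ℝ) (hwnonneg : ∀ i j, i ≠ j → 0 ≤ w i j)
    (hwzero : ∀ i j, i ≠ j → lam i = lam j → w i j = 0)
    (k : Fin n → ℝ)
    (hk : ∀ j, k j = Real.sqrt
      ((∫ ω, ∑ a, ((vecMulVec (x ⟨0, hm⟩ ω) (x ⟨0, hm⟩ ω)).mulVec (u j) a) ^ 2 ∂μ)
        - lam j ^ 2))
    (t : ℝ) (ht : 0 < t) :
    (μ {ω | (∀ i j, i ≠ j → w i j ≠ 0 →
              Real.sign (lam i - lam j) * (2 * lamhat i ω)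
                > Real.sign (lam i - lam j) * (lam i + lam j))
            ∧ t < ∑ ij ∈ Finset.univ.filter (fun ij : Fin n × Fin n => ij.1 ≠ ij.2),
                w ij.1 ij.2 * (∑ a, uhat ij.1 ω a * u ij.2 a) ^ 2}).toReal
      ≤ ∑ ij ∈ Finset.univ.filter (fun ij : Fin n × Fin n => ij.1 ≠ ij.2),
          4 * w ij.1 ij.2 * k ij.2 ^ 2 / (m * t * (lam ij.1 - lam ij.2) ^ 2) := by
  
  classical
  have hm0 : (m:ℝ) ≠ 0 := Nat.cast_ne_zero.mpr hm.ne'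
  set p0 : Fin m := ⟨0, hm⟩ with hp0
  set S : Finset (Fin n × Fin n) :=
    Finset.univ.filter (fun ij : Fin n × Fin n => ij.1 ≠ ij.2) with hS
  have hxa : ∀ a, Measurable (fun ω => x p0 ω a) :=
    fun a => (measurable_pi_apply a).comp (hmeas p0)
  -- the sample covariance applied to u j, in explicit form
  have hDvec : ∀ j ω a, (Chat ω).mulVec (u j) a
      = (m:ℝ)⁻¹ * ∑ p, (∑ b, x p ω b * u j b) * x p ω a := by
    intro j ω a
    rw [hChat]
    simp only [Matrix.mulVec, dotProduct, Matrix.smul_apply, Matrix.sum_apply,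
      vecMulVec_apply, smul_eq_mul]
    simp only [Finset.mul_sum, Finset.sum_mul]
    rw [Finset.sum_comm]
    refine Finset.sum_congr rfl fun p _ => Finset.sum_congr rfl fun b _ => by ring
  -- integrability of products of coordinates
  have hxxint : ∀ a b, Integrable (fun ω => x p0 ω a * x p0 ω b) μ := by
    intro a b
    refine ((integrable_const (1:ℝ)).add hL4).mono'
      ((hxa a).mul (hxa b)).aestronglyMeasurable ?_
    filter_upwards with ω
    simp only [Pi.add_apply]
    have h2a : x p0 ω a ^ 2 ≤ ∑ c, x p0 ω c ^ 2 :=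
      Finset.single_le_sum (f := fun c => x p0 ω c ^ 2) (fun c _ => sq_nonneg _)
        (Finset.mem_univ a)
    have h2b : x p0 ω b ^ 2 ≤ ∑ c, x p0 ω c ^ 2 :=
      Finset.single_le_sum (f := fun c => x p0 ω c ^ 2) (fun c _ => sq_nonneg _)
        (Finset.mem_univ b)
    have hN0 : (0:ℝ) ≤ ∑ c, x p0 ω c ^ 2 := Finset.sum_nonneg fun c _ => sq_nonneg _
    rw [Real.norm_eq_abs, abs_mul]
    nlinarith [sq_abs (x p0 ω a), sq_abs (x p0 ω b), abs_nonneg (x p0 ω a),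
      abs_nonneg (x p0 ω b), sq_nonneg (|x p0 ω a| - |x p0 ω b|),
      sq_nonneg ((∑ c, x p0 ω c ^ 2) - 1)]
  -- the mean of x xᵀ u j is lam j * u j
  have hcmean : ∀ j a, ∫ ω, (∑ b, x p0 ω b * u j b) * x p0 ω a ∂μ
      = lam j * u j a := by
    intro j a
    have h1 : ∀ ω, (∑ b, x p0 ω b * u j b) * x p0 ω a
        = ∑ b, (x p0 ω a * x p0 ω b) * u j b := by
      intro ω
      rw [Finset.sum_mul]
      exact Finset.sum_congr rfl fun b _ => by ring
    rw [integral_congr_ae (Filter.Eventually.of_forall h1),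
      integral_finset_sum _ fun b _ => (hxxint a b).mul_const _]
    have h2 : ∀ b, ∫ ω, (x p0 ω a * x p0 ω b) * u j b ∂μ = C a b * u j b := by
      intro b
      rw [integral_mul_const, ← hC]
    rw [Finset.sum_congr rfl fun b _ => h2 b]
    have h3 := congrFun (hueig j) a
    simpa [Matrix.mulVec, dotProduct] using h3
  have hunorm : ∀ j, ∑ a, u j a ^ 2 = 1 := by
    intro j
    have h0 := huortho j j
    simp at h0
    rw [← h0]
    exact Finset.sum_congr rfl fun a _ => pow_two _
  -- apply the variance lemma
  have VS := fun j => variance_step μ hm x hmeas hindep hident hL4 (u j) (hunorm j)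
    (fun a => lam j * u j a) (hcmean j)
  have hcsq : ∀ j, ∑ a, (lam j * u j a) ^ 2 = lam j ^ 2 := by
    intro j
    have : ∀ a, (lam j * u j a) ^ 2 = lam j ^ 2 * u j a ^ 2 := fun a => by ring
    rw [Finset.sum_congr rfl fun a _ => this a, ← Finset.mul_sum, hunorm j, mul_one]
  -- value of k j ^ 2
  have hSval : ∀ j, (∫ ω, ∑ a, ((vecMulVec (x p0 ω) (x p0 ω)).mulVec (u j) a) ^ 2 ∂μ)
      = ∫ ω, ∑ a, ((∑ b, x p0 ω b * u j b) * x p0 ω a) ^ 2 ∂μ := by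
    intro j
    refine integral_congr_ae (Filter.Eventually.of_forall fun ω => ?_)
    refine Finset.sum_congr rfl fun a _ => ?_
    congr 1
    simp only [Matrix.mulVec, dotProduct, vecMulVec_apply]
    rw [Finset.sum_mul]
    exact Finset.sum_congr rfl fun b _ => by ring
  have hk2 : ∀ j, k j ^ 2
      = (∫ ω, ∑ a, ((∑ b, x p0 ω b * u j b) * x p0 ω a) ^ 2 ∂μ) - lam j ^ 2 := by
    intro j
    have hnn := (VS j).2.2
    rw [hcsq j] at hnn
    rw [hk j, hSval j, Real.sq_sqrt hnn]
  -- the dominating function g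
  set g : Ω → ℝ := fun ω => ∑ ij ∈ S, (4 * w ij.1 ij.2 / (lam ij.1 - lam ij.2) ^ 2) *
      ∑ a, ((Chat ω).mulVec (u ij.2) a - lam ij.2 * u ij.2 a) ^ 2 with hg
  have hgfun : ∀ (j : Fin n),
      (fun ω => ∑ a, ((Chat ω).mulVec (u j) a - lam j * u j a) ^ 2)
      = fun ω => ∑ a,
          ((m:ℝ)⁻¹ * (∑ p, (∑ b, x p ω b * u j b) * x p ω a) - lam j * u j a) ^ 2 := by
    intro j
    funext ω
    exact Finset.sum_congr rfl fun a _ => by rw [hDvec j ω a]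
  have hgterm_int : ∀ (j : Fin n),
      Integrable (fun ω => ∑ a, ((Chat ω).mulVec (u j) a - lam j * u j a) ^ 2) μ := by
    intro j
    rw [hgfun j]
    exact (VS j).1
  have hgint : Integrable g μ := by
    rw [hg]
    exact integrable_finset_sum _ fun ij _ => (hgterm_int ij.2).const_mul _
  have hg0 : ∀ ω, 0 ≤ g ω := by
    intro ω
    refine Finset.sum_nonneg fun ij hij => ?_
    have hij' : ij.1 ≠ ij.2 := (Finset.mem_filter.mp hij).2
    refine mul_nonneg (div_nonneg (by linarith [hwnonneg ij.1 ij.2 hij']) (sq_nonneg _))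
      (Finset.sum_nonneg fun a _ => sq_nonneg _)
  -- value of the integral of g
  have hgval : ∫ ω, g ω ∂μ = ∑ ij ∈ S,
      (4 * w ij.1 ij.2 / (lam ij.1 - lam ij.2) ^ 2) * ((m:ℝ)⁻¹ * k ij.2 ^ 2) := by
    rw [hg, integral_finset_sum _ fun ij _ => (hgterm_int ij.2).const_mul _]
    refine Finset.sum_congr rfl fun ij _ => ?_
    rw [integral_const_mul]
    congr 1
    have h1 : (∫ ω, ∑ a, ((Chat ω).mulVec (u ij.2) a - lam ij.2 * u ij.2 a) ^ 2 ∂μ)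
        = ∫ ω, ∑ a, ((m:ℝ)⁻¹ * (∑ p, (∑ b, x p ω b * u ij.2 b) * x p ω a)
            - lam ij.2 * u ij.2 a) ^ 2 ∂μ := by rw [hgfun ij.2]
    rw [h1, (VS ij.2).2.1, hcsq ij.2, ← hk2 ij.2]
  -- pointwise bound on the event
  have hsub : {ω | (∀ i j, i ≠ j → w i j ≠ 0 →
              Real.sign (lam i - lam j) * (2 * lamhat i ω)
                > Real.sign (lam i - lam j) * (lam i + lam j))
            ∧ t < ∑ ij ∈ Finset.univ.filter (fun ij : Fin n × Fin n => ij.1 ≠ ij.2),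
                w ij.1 ij.2 * (∑ a, uhat ij.1 ω a * u ij.2 a) ^ 2}
      ⊆ {ω | t ≤ g ω} := by
    intro ω hω
    obtain ⟨hE, hsum⟩ := hω
    refine le_trans (le_of_lt hsum) ?_
    rw [hg]
    refine Finset.sum_le_sum fun ij hij => ?_
    obtain ⟨i, j⟩ := ij
    have hij' : i ≠ j := (Finset.mem_filter.mp hij).2
    by_cases hw : w i j = 0
    · simp [hw]
    · have hs : lam i - lam j ≠ 0 := fun h => hw (hwzero i j hij' (sub_eq_zero.mp h))
      have hsign := hE i j hij' hw
      -- symmetry of Chat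
      have hsym : ∀ a b, Chat ω a b = Chat ω b a := by
        intro a b
        rw [hChat]
        simp only [Matrix.smul_apply, Matrix.sum_apply, vecMulVec_apply, smul_eq_mul]
        congr 1
        exact Finset.sum_congr rfl fun p _ => mul_comm _ _
      have hswap : ∑ a, uhat i ω a * (Chat ω).mulVec (u j) a
          = lamhat i ω * ∑ a, uhat i ω a * u j a := by
        simp only [Matrix.mulVec, dotProduct]
        calc ∑ a, uhat i ω a * ∑ b, Chat ω a b * u j b
            = ∑ a, ∑ b, uhat i ω a * (Chat ω a b * u j b) := by
              exact Finset.sum_congr rfl fun a _ => by rw [Finset.mul_sum]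
          _ = ∑ b, ∑ a, uhat i ω a * (Chat ω a b * u j b) := Finset.sum_comm
          _ = ∑ b, ((Chat ω).mulVec (uhat i ω) b) * u j b := by
              refine Finset.sum_congr rfl fun b _ => ?_
              simp only [Matrix.mulVec, dotProduct]
              rw [Finset.sum_mul]
              exact Finset.sum_congr rfl fun a _ => by rw [hsym a b]; ring
          _ = ∑ b, (lamhat i ω * uhat i ω b) * u j b := by
              refine Finset.sum_congr rfl fun b _ => ?_
              rw [huhateig ω i]
              simp [smul_eq_mul]
          _ = lamhat i ω * ∑ b, uhat i ω b * u j b := by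
              rw [Finset.mul_sum]
              exact Finset.sum_congr rfl fun b _ => by ring
      have hid : (lamhat i ω - lam j) * (∑ a, uhat i ω a * u j a)
          = ∑ a, uhat i ω a * ((Chat ω).mulVec (u j) a - lam j * u j a) := by
        have : ∀ a, uhat i ω a * ((Chat ω).mulVec (u j) a - lam j * u j a)
            = uhat i ω a * (Chat ω).mulVec (u j) a - lam j * (uhat i ω a * u j a) := by
          intro a; ring
        rw [Finset.sum_congr rfl fun a _ => this a, Finset.sum_sub_distrib, hswap,
          ← Finset.mul_sum]
        ring
      have hCS : (∑ a, uhat i ω a * ((Chat ω).mulVec (u j) a - lam j * u j a)) ^ 2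
          ≤ ∑ a, ((Chat ω).mulVec (u j) a - lam j * u j a) ^ 2 := by
        have h := Finset.sum_mul_sq_le_sq_mul_sq Finset.univ (uhat i ω)
          (fun a => (Chat ω).mulVec (u j) a - lam j * u j a)
        have h0 := huhatortho ω i i
        simp at h0
        have hnorm : ∑ a, uhat i ω a ^ 2 = 1 := by
          rw [← h0]
          exact Finset.sum_congr rfl fun a _ => pow_two _
        rw [hnorm, one_mul] at h
        exact h
      have h4 : (lam i - lam j) ^ 2 < 4 * (lamhat i ω - lam j) ^ 2 := by
        rcases lt_trichotomy (lam i - lam j) 0 with hlt | heq0 | hgt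
        · rw [Real.sign_of_neg hlt] at hsign
          nlinarith
        · exact absurd heq0 hs
        · rw [Real.sign_of_pos hgt] at hsign
          nlinarith
      have hQ0 : 0 ≤ ∑ a, ((Chat ω).mulVec (u j) a - lam j * u j a) ^ 2 :=
        Finset.sum_nonneg fun a _ => sq_nonneg _
      have he2 : (lamhat i ω - lam j) ^ 2 * (∑ a, uhat i ω a * u j a) ^ 2
          ≤ ∑ a, ((Chat ω).mulVec (u j) a - lam j * u j a) ^ 2 := by
        calc (lamhat i ω - lam j) ^ 2 * (∑ a, uhat i ω a * u j a) ^ 2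
            = ((lamhat i ω - lam j) * (∑ a, uhat i ω a * u j a)) ^ 2 := by ring
          _ = (∑ a, uhat i ω a * ((Chat ω).mulVec (u j) a - lam j * u j a)) ^ 2 := by
              rw [hid]
          _ ≤ _ := hCS
      rw [div_mul_eq_mul_div, le_div_iff₀ (by positivity : (0:ℝ) < (lam i - lam j) ^ 2)]
      nlinarith [hwnonneg i j hij', sq_nonneg (∑ a, uhat i ω a * u j a),
        mul_nonneg (hwnonneg i j hij') (sq_nonneg (∑ a, uhat i ω a * u j a))]
  -- Markov's inequality
  have hmarkov := mul_meas_ge_le_integral_of_nonneg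
    (Filter.Eventually.of_forall hg0) hgint t
  have h1 : (μ {ω | (∀ i j, i ≠ j → w i j ≠ 0 →
              Real.sign (lam i - lam j) * (2 * lamhat i ω)
                > Real.sign (lam i - lam j) * (lam i + lam j))
            ∧ t < ∑ ij ∈ Finset.univ.filter (fun ij : Fin n × Fin n => ij.1 ≠ ij.2),
                w ij.1 ij.2 * (∑ a, uhat ij.1 ω a * u ij.2 a) ^ 2}).toReal
      ≤ (μ {ω | t ≤ g ω}).toReal :=
    ENNReal.toReal_mono (measure_ne_top μ _) (measure_mono hsub)
  have h2 : (μ {ω | t ≤ g ω}).toReal ≤ (∫ ω, g ω ∂μ) / t := by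
    rw [le_div_iff₀ ht]
    have hm' : t * (μ {ω | t ≤ g ω}).toReal ≤ ∫ ω, g ω ∂μ := hmarkov
    linarith [hm']
  refine le_trans (h1.trans h2) ?_
  rw [hgval, Finset.sum_div]
  refine le_of_eq (Finset.sum_congr rfl fun ij hij => ?_)
  have hij' : ij.1 ≠ ij.2 := (Finset.mem_filter.mp hij).2
  by_cases hw : w ij.1 ij.2 = 0
  · simp [hw]
  · have hs : lam ij.1 - lam ij.2 ≠ 0 := fun h => hw (hwzero _ _ hij' (sub_eq_zero.mp h))
    rw [eq_div_iff (by positivity : ((m:ℝ) * t * (lam ij.1 - lam ij.2) ^ 2) ≠ 0),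
      div_mul_eq_mul_div, div_mul_eq_mul_div, div_mul_eq_mul_div, div_div,
      div_eq_iff (by positivity : ((lam ij.1 - lam ij.2) ^ 2 * t) ≠ 0)]
    field_simp
end

section
/- Let x_1,…,x_m be i.i.d. random vectors in ℝ^n on a probability space, with mean zero, covariance matrix C = E[x x^T], and E[‖x‖₂⁴] < ∞. Let Ĉ = (1/m) Σ_{p=1}^m x_p x_p^T with eigenvalues λ̂_1(ω) ≥ … ≥ λ̂_n(ω), let u_i be a unit eigenvector of C with eigenvalue λ_i > 0, and set k_i = (E[‖x x^T u_i‖₂²] − λ_i²)^{1/2}. Then for every t > 0, P( min_{1≤j≤n} |λ̂_j − λ_i| ≥ t·λ_i ) ≤ (1/m)·(k_i/(λ_i·t))². -/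
open Matrix Finset MeasureTheory ProbabilityTheory

lemma aux_delta {n : ℕ} (v : Fin n → Fin n → ℝ)
    (hortho : ∀ k l, ∑ a, v k a * v l a = if k = l then 1 else 0) :
    ∀ a b, ∑ k, v k a * v k b = if a = b then 1 else 0 := by
  have hVVt : (Matrix.of v) * (Matrix.of v)ᵀ = 1 := by
    ext k l
    simpa [Matrix.mul_apply, Matrix.one_apply] using hortho k l
  have hVtV : (Matrix.of v)ᵀ * (Matrix.of v) = 1 := mul_eq_one_comm.mp hVVt
  intro a b
  have := congrFun (congrFun hVtV a) b
  simpa [Matrix.mul_apply, Matrix.one_apply] using this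

lemma aux_det {n : ℕ} (A : Matrix (Fin n) (Fin n) ℝ) (u : Fin n → ℝ)
    (v : Fin n → Fin n → ℝ) (lam : Fin n → ℝ) (lami : ℝ)
    (hortho : ∀ k l, ∑ a, v k a * v l a = if k = l then 1 else 0)
    (heig : ∀ k, A.mulVec (v k) = lam k • v k)
    (hu : ∑ a, u a ^ 2 = 1) (M : ℝ) (hM0 : 0 ≤ M)
    (hMle : ∀ k, M ≤ |lam k - lami|) :
    M ^ 2 ≤ ∑ a, (A.mulVec u a - lami * u a) ^ 2 := by
  set c : Fin n → ℝ := fun k => ∑ b, u b * v k b with hc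
  have hdelta := aux_delta v hortho
  have hexp : ∀ a, u a = ∑ k, c k * v k a := by
    intro a
    calc u a = ∑ b, u b * (if b = a then 1 else 0) := by simp
    _ = ∑ b, u b * ∑ k, v k b * v k a := by
        refine Finset.sum_congr rfl fun b _ => by rw [hdelta b a]
    _ = ∑ k, c k * v k a := by
        simp_rw [Finset.mul_sum]
        rw [Finset.sum_comm]
        refine Finset.sum_congr rfl fun k _ => ?_
        simp [hc, Finset.sum_mul, mul_assoc]
  have hnorm : ∀ d : Fin n → ℝ, ∑ a, (∑ k, d k * v k a) ^ 2 = ∑ k, d k ^ 2 := by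
    intro d
    have h0 : ∀ a, (∑ k, d k * v k a) ^ 2 = ∑ k, ∑ l, d k * d l * (v k a * v l a) := by
      intro a
      rw [sq, Finset.sum_mul_sum]
      refine Finset.sum_congr rfl fun k _ => Finset.sum_congr rfl fun l _ => by ring
    simp_rw [h0]
    rw [Finset.sum_comm]
    refine Finset.sum_congr rfl fun k _ => ?_
    rw [Finset.sum_comm]
    have h1 : ∀ l, ∑ a, d k * d l * (v k a * v l a) = d k * d l * (if k = l then 1 else 0) := by
      intro l
      rw [← Finset.mul_sum, hortho]
    simp_rw [h1]
    simp [sq]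
  have hsum1 : ∑ k, c k ^ 2 = 1 := by
    rw [← hnorm c, ← hu]
    exact Finset.sum_congr rfl fun a _ => by rw [← hexp a]
  have hw : ∀ a, A.mulVec u a - lami * u a = ∑ k, (c k * (lam k - lami)) * v k a := by
    intro a
    have h1 : A.mulVec u a = ∑ k, c k * (lam k * v k a) := by
      have h3 : A.mulVec u a = ∑ b, A a b * u b := by
        simp [Matrix.mulVec, dotProduct]
      rw [h3]
      calc ∑ b, A a b * u b = ∑ b, A a b * ∑ k, c k * v k b := by
            refine Finset.sum_congr rfl fun b _ => by rw [← hexp b]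
      _ = ∑ k, c k * ∑ b, A a b * v k b := by
          simp_rw [Finset.mul_sum]
          rw [Finset.sum_comm]
          refine Finset.sum_congr rfl fun k _ => ?_
          refine Finset.sum_congr rfl fun b _ => by ring
      _ = ∑ k, c k * (lam k * v k a) := by
          refine Finset.sum_congr rfl fun k _ => ?_
          have h4 := congrFun (heig k) a
          have h2 : A.mulVec (v k) a = ∑ b, A a b * v k b := by
            simp [Matrix.mulVec, dotProduct]
          rw [h2] at h4
          rw [h4]
          simp
    have h2 : lami * u a = ∑ k, c k * (lami * v k a) := by
      rw [hexp a, Finset.mul_sum]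
      exact Finset.sum_congr rfl fun k _ => by ring
    rw [h1, h2, ← Finset.sum_sub_distrib]
    exact Finset.sum_congr rfl fun k _ => by ring
  have hfin : ∑ a, (A.mulVec u a - lami * u a) ^ 2 = ∑ k, (c k * (lam k - lami)) ^ 2 := by
    rw [← hnorm (fun k => c k * (lam k - lami))]
    exact Finset.sum_congr rfl fun a _ => by rw [hw a]
  rw [hfin]
  calc M ^ 2 = ∑ k, c k ^ 2 * M ^ 2 := by rw [← Finset.sum_mul, hsum1, one_mul]
  _ ≤ ∑ k, c k ^ 2 * (lam k - lami) ^ 2 := by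
      refine Finset.sum_le_sum fun k _ => ?_
      refine mul_le_mul_of_nonneg_left ?_ (sq_nonneg _)
      calc M ^ 2 ≤ |lam k - lami| ^ 2 := pow_le_pow_left₀ hM0 (hMle k) 2
      _ = (lam k - lami) ^ 2 := sq_abs _
  _ = ∑ k, (c k * (lam k - lami)) ^ 2 :=
      Finset.sum_congr rfl fun k _ => (mul_pow _ _ _).symm
open Matrix Finset MeasureTheory ProbabilityTheory

lemma aux_bound {n : ℕ} (v : Fin n → ℝ) (u : Fin n → ℝ) (hu : ∑ a, u a ^ 2 = 1) (a : Fin n) :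
    |v a * ∑ b, v b * u b| ≤ ∑ b, v b ^ 2 := by
  have h1 : v a ^ 2 ≤ ∑ b, v b ^ 2 :=
    Finset.single_le_sum (f := fun b => v b ^ 2) (fun _ _ => sq_nonneg _) (Finset.mem_univ a)
  have h2 : (∑ b, v b * u b) ^ 2 ≤ ∑ b, v b ^ 2 := by
    have := Finset.sum_mul_sq_le_sq_mul_sq Finset.univ v u
    rw [hu, mul_one] at this
    exact this
  rw [abs_mul]
  nlinarith [abs_nonneg (v a), abs_nonneg (∑ b, v b * u b), sq_abs (v a),
    sq_abs (∑ b, v b * u b), sq_nonneg (|v a| - |∑ b, v b * u b|)]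

lemma aux_bound2 {n : ℕ} (v : Fin n → ℝ) (a b : Fin n) :
    |v a * v b| ≤ ∑ c, v c ^ 2 := by
  have h1 : v a ^ 2 ≤ ∑ c, v c ^ 2 :=
    Finset.single_le_sum (f := fun c => v c ^ 2) (fun _ _ => sq_nonneg _) (Finset.mem_univ a)
  have h2 : v b ^ 2 ≤ ∑ c, v c ^ 2 :=
    Finset.single_le_sum (f := fun c => v c ^ 2) (fun _ _ => sq_nonneg _) (Finset.mem_univ b)
  rw [abs_mul]
  nlinarith [abs_nonneg (v a), abs_nonneg (v b), sq_abs (v a), sq_abs (v b),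
    sq_nonneg (|v a| - |v b|)]

open Matrix Finset MeasureTheory ProbabilityTheory

/-- (Theorem 4 of the paper / relative eigenvalue error.) For i.i.d.
mean-zero samples with covariance `C`, sample covariance `Ĉ(ω)` with eigenvalues
`λ̂_1(ω) ≥ … ≥ λ̂_n(ω)` (given by a measurable orthonormal eigendecomposition), a unit
eigenvector `u_i` of `C` with eigenvalue `λ_i > 0`, and
`k_i = (E[‖x xᵀ u_i‖₂²] - λ_i²)^{1/2}`: for every `t > 0`,
`P(min_j |λ̂_j - λ_i| ≥ t λ_i) ≤ (1/m) (k_i / (λ_i t))²`. -/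
theorem eigenvalue_concentration {Ω : Type*} [MeasurableSpace Ω]
    (μ : Measure Ω) [IsProbabilityMeasure μ]
    {n m : ℕ} (hm : 0 < m) (hn : 0 < n)
    (x : Fin m → Ω → Fin n → ℝ)
    (hmeas : ∀ p, Measurable (x p))
    (hindep : iIndepFun x μ)
    (hident : ∀ p, IdentDistrib (x p) (x ⟨0, hm⟩) μ μ)
    (hmean : ∀ a, ∫ ω, x ⟨0, hm⟩ ω a ∂μ = 0)
    (C : Matrix (Fin n) (Fin n) ℝ)
    (hC : ∀ a b, C a b = ∫ ω, x ⟨0, hm⟩ ω a * x ⟨0, hm⟩ ω b ∂μ)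
    (hL4 : Integrable (fun ω => (∑ a, x ⟨0, hm⟩ ω a ^ 2) ^ 2) μ)
    (Chat : Ω → Matrix (Fin n) (Fin n) ℝ)
    (hChat : ∀ ω, Chat ω = (m : ℝ)⁻¹ • ∑ p, vecMulVec (x p ω) (x p ω))
    (uhat : Fin n → Ω → Fin n → ℝ) (lamhat : Fin n → Ω → ℝ)
    (huhatmeas : ∀ k, Measurable (uhat k))
    (hlamhatmeas : ∀ k, Measurable (lamhat k))
    (huhatortho : ∀ ω k l, ∑ a, uhat k ω a * uhat l ω a = if k = l then 1 else 0)
    (huhateig : ∀ ω k, (Chat ω).mulVec (uhat k ω) = lamhat k ω • uhat k ω)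
    (hlamhatmono : ∀ ω, Antitone (fun k => lamhat k ω))
    (ui : Fin n → ℝ) (lami : ℝ) (hlami : 0 < lami)
    (hui : ∑ a, ui a ^ 2 = 1) (hCui : C.mulVec ui = lami • ui)
    (ki : ℝ)
    (hki : ki = Real.sqrt
      ((∫ ω, ∑ a, ((vecMulVec (x ⟨0, hm⟩ ω) (x ⟨0, hm⟩ ω)).mulVec ui a) ^ 2 ∂μ)
        - lami ^ 2))
    (t : ℝ) (ht : 0 < t) :
    (μ {ω | t * lami ≤ Finset.univ.inf' (Finset.univ_nonempty_iff.mpr ⟨⟨0, hn⟩⟩)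
              (fun k => |lamhat k ω - lami|)}).toReal
      ≤ (m : ℝ)⁻¹ * (ki / (lami * t)) ^ 2 := by
  classical
  have hmne : (m:ℝ) ≠ 0 := Nat.cast_ne_zero.mpr hm.ne'
  set p0 : Fin m := ⟨0, hm⟩ with hp0
  set φ : Fin n → (Fin n → ℝ) → ℝ := fun a v => v a * (∑ b, v b * ui b) with hφ
  set z : Fin m → Fin n → Ω → ℝ := fun p a ω => φ a (x p ω) - lami * ui a with hz
  set Q : Fin m → Ω → ℝ := fun p ω => ∑ b, x p ω b ^ 2 with hQdef
  have hφmeas : ∀ a, Measurable (φ a) := fun a =>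
    (measurable_pi_apply a).mul
      (Finset.measurable_sum _ fun b _ => (measurable_pi_apply b).mul_const _)
  have hzmeas : ∀ p a, Measurable (z p a) := fun p a =>
    ((hφmeas a).comp (hmeas p)).sub_const _
  have hQmeas : ∀ p, Measurable (Q p) := fun p =>
    Finset.measurable_sum _ fun b _ => ((measurable_pi_apply b).comp (hmeas p)).pow_const 2
  have hQnonneg : ∀ p ω, 0 ≤ Q p ω := fun p ω => Finset.sum_nonneg fun b _ => sq_nonneg _
  have hg2 : Measurable (fun v : Fin n → ℝ => (∑ b, v b ^ 2) ^ 2) :=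
    (Finset.measurable_sum _ fun b _ => (measurable_pi_apply b).pow_const 2).pow_const 2
  have hQ2int : ∀ p, Integrable (fun ω => Q p ω ^ 2) μ := by
    intro p
    exact ((hident p).comp hg2).integrable_iff.mpr hL4
  have hQint : ∀ p, Integrable (Q p) μ := by
    intro p
    refine ((hQ2int p).add (integrable_const 1)).mono'
      (hQmeas p).aestronglyMeasurable (ae_of_all _ fun ω => ?_)
    simp only [Pi.add_apply]
    rw [Real.norm_eq_abs, abs_of_nonneg (hQnonneg p ω)]
    nlinarith [sq_nonneg (Q p ω - 1), hQnonneg p ω]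
  have hxabint : ∀ p a b, Integrable (fun ω => x p ω a * x p ω b) μ := by
    intro p a b
    refine (hQint p).mono'
      (((measurable_pi_apply a).comp (hmeas p)).mul
        ((measurable_pi_apply b).comp (hmeas p))).aestronglyMeasurable
      (ae_of_all _ fun ω => ?_)
    rw [Real.norm_eq_abs]
    exact aux_bound2 (x p ω) a b
  have hyint : ∀ p a, Integrable (fun ω => φ a (x p ω)) μ := by
    intro p a
    refine (hQint p).mono' ((hφmeas a).comp (hmeas p)).aestronglyMeasurable
      (ae_of_all _ fun ω => ?_)
    rw [Real.norm_eq_abs]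
    exact aux_bound (x p ω) ui hui a
  have hy2int : ∀ p a, Integrable (fun ω => φ a (x p ω) ^ 2) μ := by
    intro p a
    refine (hQ2int p).mono'
      (((hφmeas a).comp (hmeas p)).pow_const 2).aestronglyMeasurable
      (ae_of_all _ fun ω => ?_)
    have h := aux_bound (x p ω) ui hui a
    rw [Real.norm_eq_abs, abs_pow]
    exact pow_le_pow_left₀ (abs_nonneg _) h 2
  have hzint : ∀ p a, Integrable (z p a) μ := fun p a => (hyint p a).sub (integrable_const _)
  have hz2int : ∀ p a, Integrable (fun ω => z p a ω ^ 2) μ := by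
    intro p a
    have h : (fun ω => z p a ω ^ 2)
        = fun ω => (φ a (x p ω) ^ 2 - (2 * lami * ui a) * φ a (x p ω)) + (lami * ui a) ^ 2 := by
      funext ω; simp only [hz]; ring
    rw [h]
    exact ((hy2int p a).sub ((hyint p a).const_mul _)).add (integrable_const _)
  have hy0mean : ∀ a, ∫ ω, φ a (x p0 ω) ∂μ = lami * ui a := by
    intro a
    have hrw : ∀ ω, φ a (x p0 ω) = ∑ b, (x p0 ω a * x p0 ω b) * ui b := by
      intro ω
      simp only [hφ, Finset.mul_sum]
      exact Finset.sum_congr rfl fun b _ => by ring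
    calc ∫ ω, φ a (x p0 ω) ∂μ = ∑ b, ∫ ω, (x p0 ω a * x p0 ω b) * ui b ∂μ := by
          simp_rw [hrw]
          exact integral_finset_sum _ fun b _ => (hxabint p0 a b).mul_const _
    _ = ∑ b, C a b * ui b := by
        refine Finset.sum_congr rfl fun b _ => ?_
        rw [integral_mul_const, ← hC a b]
    _ = lami * ui a := by
        have h := congrFun hCui a
        simpa [Matrix.mulVec, dotProduct] using h
  have hzid : ∀ p a, IdentDistrib (z p a) (z p0 a) μ μ := by
    intro p a
    exact (hident p).comp ((hφmeas a).sub_const (lami * ui a))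
  have hzmean : ∀ p a, ∫ ω, z p a ω ∂μ = 0 := by
    intro p a
    rw [(hzid p a).integral_eq]
    have h1 : ∫ ω, z p0 a ω ∂μ = (∫ ω, φ a (x p0 ω) ∂μ) - ∫ _ω, lami * ui a ∂μ :=
      integral_sub (hyint p0 a) (integrable_const _)
    rw [h1, integral_const, probReal_univ, one_smul, hy0mean a, sub_self]
  have hz2eq : ∀ p a, ∫ ω, z p a ω ^ 2 ∂μ = ∫ ω, z p0 a ω ^ 2 ∂μ := by
    intro p a
    exact ((hzid p a).comp (measurable_id.pow_const 2)).integral_eq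
  have hzindep : ∀ (a : Fin n) (p q : Fin m), p ≠ q → IndepFun (z p a) (z q a) μ := by
    intro a p q hpq
    exact (hindep.indepFun hpq).comp ((hφmeas a).sub_const (lami * ui a))
      ((hφmeas a).sub_const (lami * ui a))
  have hcross : ∀ (a : Fin n) (p q : Fin m), p ≠ q → ∫ ω, z p a ω * z q a ω ∂μ = 0 := by
    intro a p q hpq
    have h := (hzindep a p q hpq).integral_mul_eq_mul_integral (hzmeas p a).aestronglyMeasurable
      (hzmeas q a).aestronglyMeasurable
    have h2 : ∫ ω, z p a ω * z q a ω ∂μ = (∫ ω, z p a ω ∂μ) * ∫ ω, z q a ω ∂μ := h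
    rw [h2, hzmean p a, hzmean q a, mul_zero]
  have hprodint : ∀ (a : Fin n) (p q : Fin m), Integrable (fun ω => z p a ω * z q a ω) μ := by
    intro a p q
    rcases eq_or_ne p q with rfl | hpq
    · have : (fun ω => z p a ω * z p a ω) = fun ω => z p a ω ^ 2 := by
        funext ω; ring
      rw [this]; exact hz2int p a
    · exact (hzindep a p q hpq).integrable_mul (hzint p a) (hzint q a)
  set F : Ω → ℝ := fun ω => ∑ a, ((Chat ω).mulVec ui a - lami * ui a) ^ 2 with hF
  have hChatmul : ∀ ω a, (Chat ω).mulVec ui a = (m:ℝ)⁻¹ * ∑ p, φ a (x p ω) := by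
    intro ω a
    have h1 : (Chat ω).mulVec ui a = ∑ b, ((m:ℝ)⁻¹ * ∑ p, x p ω a * x p ω b) * ui b := by
      rw [hChat ω]
      simp [Matrix.mulVec, dotProduct, Matrix.smul_apply, Matrix.sum_apply,
        Matrix.vecMulVec_apply]
    rw [h1]
    calc ∑ b, ((m:ℝ)⁻¹ * ∑ p, x p ω a * x p ω b) * ui b
        = (m:ℝ)⁻¹ * ∑ b, ∑ p, (x p ω a * x p ω b) * ui b := by
          rw [Finset.mul_sum]
          refine Finset.sum_congr rfl fun b _ => ?_
          rw [mul_assoc, Finset.sum_mul]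
    _ = (m:ℝ)⁻¹ * ∑ p, φ a (x p ω) := by
        congr 1
        rw [Finset.sum_comm]
        refine Finset.sum_congr rfl fun p _ => ?_
        simp only [hφ, Finset.mul_sum]
        exact Finset.sum_congr rfl fun b _ => by ring
  have hterm : ∀ ω a, (Chat ω).mulVec ui a - lami * ui a = (m:ℝ)⁻¹ * ∑ p, z p a ω := by
    intro ω a
    rw [hChatmul ω a]
    have h2 : ∑ p, z p a ω = (∑ p, φ a (x p ω)) - (m:ℝ) * (lami * ui a) := by
      simp only [hz, Finset.sum_sub_distrib, Finset.sum_const, Finset.card_univ,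
        Fintype.card_fin, nsmul_eq_mul]
    rw [h2]
    field_simp
  have hFrep : ∀ ω, F ω = ((m:ℝ)⁻¹)^2 * ∑ p, ∑ q, ∑ a, z p a ω * z q a ω := by
    intro ω
    have h3 : ∀ a, ((Chat ω).mulVec ui a - lami * ui a) ^ 2
        = ((m:ℝ)⁻¹)^2 * ∑ p, ∑ q, z p a ω * z q a ω := by
      intro a
      rw [hterm ω a, mul_pow, pow_two (∑ p, z p a ω), Finset.sum_mul_sum]
    simp only [hF, h3]
    rw [← Finset.mul_sum]
    congr 1
    rw [Finset.sum_comm]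
    exact Finset.sum_congr rfl fun p _ => by rw [Finset.sum_comm]
  have hFint : Integrable F μ := by
    have h4 : F = fun ω => ((m:ℝ)⁻¹)^2 * ∑ p, ∑ q, ∑ a, z p a ω * z q a ω := funext hFrep
    rw [h4]
    exact (integrable_finset_sum _ fun p _ => integrable_finset_sum _ fun q _ =>
      integrable_finset_sum _ fun a _ => hprodint a p q).const_mul _
  set S : ℝ := ∑ a, ∫ ω, z p0 a ω ^ 2 ∂μ with hS
  have hFmean : ∫ ω, F ω ∂μ = (m:ℝ)⁻¹ * S := by
    calc ∫ ω, F ω ∂μ = ((m:ℝ)⁻¹)^2 * ∑ p, ∑ q, ∑ a, ∫ ω, z p a ω * z q a ω ∂μ := by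
          simp_rw [hFrep]
          rw [integral_const_mul]
          congr 1
          rw [integral_finset_sum _ (fun p _ => integrable_finset_sum _ fun q _ =>
            integrable_finset_sum _ fun a _ => hprodint a p q)]
          refine Finset.sum_congr rfl fun p _ => ?_
          rw [integral_finset_sum _ (fun q _ => integrable_finset_sum _ fun a _ =>
            hprodint a p q)]
          exact Finset.sum_congr rfl fun q _ => integral_finset_sum _ fun a _ => hprodint a p q
    _ = ((m:ℝ)⁻¹)^2 * ∑ _p : Fin m, S := by
        congr 1
        refine Finset.sum_congr rfl fun p _ => ?_
        rw [Finset.sum_eq_single p]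
        · rw [hS]
          refine Finset.sum_congr rfl fun a _ => ?_
          have h5 : (fun ω => z p a ω * z p a ω) = fun ω => z p a ω ^ 2 := by
            funext ω; ring
          rw [h5]
          exact hz2eq p a
        · intro q _ hqp
          refine Finset.sum_eq_zero fun a _ => hcross a p q (fun h => hqp h.symm)
        · intro h
          exact absurd (Finset.mem_univ p) h
    _ = (m:ℝ)⁻¹ * S := by
        rw [Finset.sum_const, Finset.card_univ, Fintype.card_fin, nsmul_eq_mul]
        field_simp
  have hSval : S = (∫ ω, ∑ a, (φ a (x p0 ω)) ^ 2 ∂μ) - lami ^ 2 := by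
    have h1 : ∀ a, ∫ ω, z p0 a ω ^ 2 ∂μ
        = (∫ ω, φ a (x p0 ω) ^ 2 ∂μ) - (lami * ui a) ^ 2 := by
      intro a
      have hexp : (fun ω => z p0 a ω ^ 2)
          = fun ω => (φ a (x p0 ω) ^ 2 - (2 * lami * ui a) * φ a (x p0 ω)) + (lami * ui a) ^ 2 := by
        funext ω; simp only [hz]; ring
      calc ∫ ω, z p0 a ω ^ 2 ∂μ
          = ∫ ω, ((φ a (x p0 ω) ^ 2 - (2 * lami * ui a) * φ a (x p0 ω)) + (lami * ui a) ^ 2) ∂μ := by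
            rw [hexp]
      _ = ((∫ ω, φ a (x p0 ω) ^ 2 ∂μ) - ∫ ω, (2 * lami * ui a) * φ a (x p0 ω) ∂μ)
            + ∫ _ω, (lami * ui a) ^ 2 ∂μ := by
          have hint1 : Integrable (fun ω => φ a (x p0 ω) ^ 2
              - 2 * lami * ui a * φ a (x p0 ω)) μ :=
            (hy2int p0 a).sub ((hyint p0 a).const_mul (2 * lami * ui a))
          rw [integral_add hint1 (integrable_const _),
            integral_sub (hy2int p0 a) ((hyint p0 a).const_mul (2 * lami * ui a))]
      _ = (∫ ω, φ a (x p0 ω) ^ 2 ∂μ) - (lami * ui a) ^ 2 := by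
          rw [integral_const_mul, hy0mean a, integral_const, probReal_univ,
            one_smul]
          ring
    rw [hS]
    simp_rw [h1]
    rw [Finset.sum_sub_distrib, ← integral_finset_sum _ (fun a _ => hy2int p0 a)]
    congr 1
    have : ∀ a : Fin n, (lami * ui a) ^ 2 = lami ^ 2 * ui a ^ 2 := fun a => by ring
    simp_rw [this]
    rw [← Finset.mul_sum, hui, mul_one]
  have hSnonneg : 0 ≤ S :=
    Finset.sum_nonneg fun a _ => integral_nonneg fun ω => sq_nonneg _
  have hvec : ∀ (w : Fin n → ℝ) (a : Fin n), (vecMulVec w w).mulVec ui a = φ a w := by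
    intro w a
    simp [Matrix.mulVec, dotProduct, Matrix.vecMulVec_apply, hφ, Finset.mul_sum, mul_assoc]
  have hki2 : ki ^ 2 = S := by
    have harg : (∫ ω, ∑ a, ((vecMulVec (x p0 ω) (x p0 ω)).mulVec ui a) ^ 2 ∂μ) - lami ^ 2 = S := by
      rw [hSval]
      congr 1
      refine integral_congr_ae (ae_of_all _ fun ω => ?_)
      exact Finset.sum_congr rfl fun a _ => by rw [hvec]
    rw [hki, harg, Real.sq_sqrt hSnonneg]
  -- Markov and conclusion
  have hFnonneg : 0 ≤ᵐ[μ] F :=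
    ae_of_all _ fun ω => Finset.sum_nonneg fun a _ => sq_nonneg _
  have hmarkov := mul_meas_ge_le_integral_of_nonneg hFnonneg hFint ((t * lami) ^ 2)
  have hsub : {ω | t * lami ≤ Finset.univ.inf' (Finset.univ_nonempty_iff.mpr ⟨⟨0, hn⟩⟩)
        (fun k => |lamhat k ω - lami|)} ⊆ {ω | (t * lami) ^ 2 ≤ F ω} := by
    intro ω hω
    simp only [Set.mem_setOf_eq] at hω ⊢
    set M := Finset.univ.inf' (Finset.univ_nonempty_iff.mpr ⟨⟨0, hn⟩⟩)
      (fun k => |lamhat k ω - lami|) with hM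
    have htl0 : (0:ℝ) ≤ t * lami := by positivity
    have hM2 : (t * lami) ^ 2 ≤ M ^ 2 := pow_le_pow_left₀ htl0 hω 2
    refine le_trans hM2 ?_
    exact aux_det (Chat ω) ui (fun k => uhat k ω) (fun k => lamhat k ω) lami
      (huhatortho ω) (huhateig ω) hui M (le_trans htl0 hω)
      (fun k => Finset.inf'_le _ (Finset.mem_univ k))
  have hμle : (μ {ω | t * lami ≤ Finset.univ.inf' (Finset.univ_nonempty_iff.mpr ⟨⟨0, hn⟩⟩)
        (fun k => |lamhat k ω - lami|)}).toReal ≤ (μ {ω | (t * lami) ^ 2 ≤ F ω}).toReal :=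
    ENNReal.toReal_mono (measure_ne_top μ _) (measure_mono hsub)
  have htl2 : (0:ℝ) < (t * lami) ^ 2 := by positivity
  have hfinal : (μ {ω | (t * lami) ^ 2 ≤ F ω}).toReal ≤ (m:ℝ)⁻¹ * S / (t * lami) ^ 2 := by
    rw [le_div_iff₀ htl2]
    calc (μ {ω | (t * lami) ^ 2 ≤ F ω}).toReal * (t * lami) ^ 2
        = (t * lami) ^ 2 * (μ {ω | (t * lami) ^ 2 ≤ F ω}).toReal := mul_comm _ _
    _ ≤ ∫ ω, F ω ∂μ := hmarkov
    _ = (m:ℝ)⁻¹ * S := hFmean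
  refine le_trans (le_trans hμle hfinal) (le_of_eq ?_)
  rw [div_pow, hki2, mul_comm lami t, mul_div_assoc]
end

section
/- Let x_1,…,x_m be vectors in ℝ^n, let Ĉ = (1/m) Σ_{p=1}^m x_p x_p^T, and let C be a symmetric n×n matrix. Let u_j be a unit eigenvector of C with eigenvalue λ_j ≥ 0, let λ_i be another eigenvalue of C with λ_i ≠ λ_j, and let û_i be a unit eigenvector of Ĉ with eigenvalue λ̂_i satisfying sign(λ_i − λ_j)·2λ̂_i > sign(λ_i − λ_j)·(λ_i + λ_j). Then |⟨û_i, u_j⟩| ≤ (2 / (m·|λ_i − λ_j|)) · Σ_{p=1}^m ( ⟨u_j, x_p⟩²·(‖x_p‖₂² − λ_j) + λ_j² )^{1/2}. -/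
open Matrix Finset

/-- Deterministic bound on `|⟨û_i, u_j⟩|` for the sample covariance
`Ĉ = (1/m) ∑ₚ x_p x_pᵀ` of vectors `x_1, …, x_m` in `ℝ^n` and a symmetric matrix `C`:
if `u_j` is a unit eigenvector of `C` with eigenvalue `λ_j ≥ 0`, `λ_i ≠ λ_j` is another
eigenvalue of `C`, and `û_i` is a unit eigenvector of `Ĉ` with eigenvalue `λ̂_i`
satisfying the sign condition, then
`|⟨û_i, u_j⟩| ≤ (2 / (m |λ_i - λ_j|)) ∑ₚ √(⟨u_j, x_p⟩² (‖x_p‖₂² - λ_j) + λ_j²)`. -/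
theorem sample_cov_angle_deterministic_bound {n m : ℕ} (hm : 0 < m)
    (x : Fin m → Fin n → ℝ)
    (Chat : Matrix (Fin n) (Fin n) ℝ)
    (hChat : Chat = (m : ℝ)⁻¹ • ∑ p, vecMulVec (x p) (x p))
    (C : Matrix (Fin n) (Fin n) ℝ) (hCsymm : C.IsSymm)
    (uj : Fin n → ℝ) (lamj : ℝ) (hlamj : 0 ≤ lamj)
    (huj : ∑ a, uj a ^ 2 = 1) (hCuj : C.mulVec uj = lamj • uj)
    (lami : ℝ) (v : Fin n → ℝ) (hv : v ≠ 0) (hCv : C.mulVec v = lami • v)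
    (hne : lami ≠ lamj)
    (uhati : Fin n → ℝ) (lamhati : ℝ)
    (huhati : ∑ a, uhati a ^ 2 = 1)
    (hChatuhati : Chat.mulVec uhati = lamhati • uhati)
    (hcond : Real.sign (lami - lamj) * (2 * lamhati)
      > Real.sign (lami - lamj) * (lami + lamj)) :
    |∑ a, uhati a * uj a|
      ≤ 2 / (m * |lami - lamj|)
        * ∑ p, Real.sqrt ((∑ a, uj a * x p a) ^ 2 * ((∑ a, x p a ^ 2) - lamj)
            + lamj ^ 2) := by
  have hm0 : (m : ℝ) ≠ 0 := Nat.cast_ne_zero.mpr hm.ne'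
  set S : ℝ := ∑ a, uhati a * uj a with hSdef
  -- Chat applied to uhati, entrywise
  have hMV : ∀ a, Chat.mulVec uhati a
      = (m : ℝ)⁻¹ * ∑ p, x p a * ∑ b, x p b * uhati b := by
    intro a
    simp only [hChat, Matrix.mulVec, dotProduct, Matrix.smul_apply,
      Matrix.sum_apply, Matrix.vecMulVec_apply, smul_eq_mul]
    simp_rw [Finset.mul_sum, Finset.sum_mul]
    rw [Finset.sum_comm]
    congr 1; ext p; congr 1; ext b; ring
  -- key identity
  have h1 : lamhati * S
      = (m : ℝ)⁻¹ * ∑ p, (∑ b, x p b * uhati b) * (∑ a, x p a * uj a) := by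
    have : lamhati * S = ∑ a, Chat.mulVec uhati a * uj a := by
      rw [hChatuhati]
      simp [hSdef, Finset.mul_sum, mul_assoc]
    rw [this]
    obtain ⟨c', hc'⟩ : ∃ c' : Fin m → ℝ, ∀ p, c' p = ∑ b, x p b * uhati b :=
      ⟨_, fun p => rfl⟩
    simp_rw [hMV, ← hc']
    simp only [Finset.mul_sum, Finset.sum_mul]
    rw [Finset.sum_comm]
    exact Finset.sum_congr rfl fun p _ => Finset.sum_congr rfl fun a _ => by ring
  have hkey : (lamhati - lamj) * S
      = (m : ℝ)⁻¹ * ∑ p, ∑ a,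
          uhati a * ((∑ b, uj b * x p b) * x p a - lamj * uj a) := by
    have expand : ∀ p : Fin m,
        (∑ a, uhati a * ((∑ b, uj b * x p b) * x p a - lamj * uj a))
          = (∑ b, x p b * uhati b) * (∑ a, x p a * uj a) - lamj * S := by
      intro p
      simp_rw [mul_sub, Finset.sum_sub_distrib]
      congr 1
      · have l1 : ∑ a, uhati a * ((∑ b, uj b * x p b) * x p a)
            = (∑ b, uj b * x p b) * ∑ a, x p a * uhati a := by
          rw [Finset.mul_sum]; exact Finset.sum_congr rfl fun a _ => by ring
        rw [l1, mul_comm]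
        congr 1
        exact Finset.sum_congr rfl fun b _ => mul_comm _ _
      · simp_rw [hSdef, Finset.mul_sum]
        congr 1; ext a; ring
    simp_rw [expand]
    rw [Finset.sum_sub_distrib, Finset.sum_const, Finset.card_univ, Fintype.card_fin,
      nsmul_eq_mul]
    rw [mul_sub, ← h1]
    field_simp
  -- per-term Cauchy-Schwarz bound
  have hterm : ∀ p : Fin m,
      |∑ a, uhati a * ((∑ b, uj b * x p b) * x p a - lamj * uj a)|
        ≤ Real.sqrt ((∑ a, uj a * x p a) ^ 2 * ((∑ a, x p a ^ 2) - lamj) + lamj ^ 2) := by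
    intro p
    set c : ℝ := ∑ b, uj b * x p b with hc
    set w : Fin n → ℝ := fun a => c * x p a - lamj * uj a with hw
    have hcs : (∑ a, uhati a * w a) ^ 2 ≤ ∑ a, w a ^ 2 := by
      calc (∑ a, uhati a * w a) ^ 2
          ≤ (∑ a, uhati a ^ 2) * ∑ a, w a ^ 2 :=
            Finset.sum_mul_sq_le_sq_mul_sq _ _ _
        _ = ∑ a, w a ^ 2 := by rw [huhati, one_mul]
    have hwsum : ∑ a, w a ^ 2 = c ^ 2 * ((∑ a, x p a ^ 2) - 2 * lamj) + lamj ^ 2 := by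
      have : ∀ a, w a ^ 2 = c ^ 2 * x p a ^ 2 - 2 * c * lamj * (uj a * x p a)
          + lamj ^ 2 * uj a ^ 2 := by
        intro a; simp only [hw]; ring
      simp_rw [this]
      rw [Finset.sum_add_distrib, Finset.sum_sub_distrib, ← Finset.mul_sum,
        ← Finset.mul_sum, ← Finset.mul_sum, huj, ← hc]
      ring
    have hle : ∑ a, w a ^ 2 ≤ c ^ 2 * ((∑ a, x p a ^ 2) - lamj) + lamj ^ 2 := by
      rw [hwsum]
      nlinarith [sq_nonneg c, hlamj]
    calc |∑ a, uhati a * w a| = Real.sqrt ((∑ a, uhati a * w a) ^ 2) := by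
          rw [Real.sqrt_sq_eq_abs]
      _ ≤ Real.sqrt (c ^ 2 * ((∑ a, x p a ^ 2) - lamj) + lamj ^ 2) := by
          apply Real.sqrt_le_sqrt
          exact hcs.trans hle
  -- bound on |(lamhati - lamj) S|
  set A : ℝ := ∑ p, Real.sqrt ((∑ a, uj a * x p a) ^ 2 * ((∑ a, x p a ^ 2) - lamj)
      + lamj ^ 2) with hA
  have hbound : |lamhati - lamj| * |S| ≤ (m : ℝ)⁻¹ * A := by
    rw [← abs_mul, hkey, abs_mul]
    rw [abs_of_nonneg (by positivity : (0:ℝ) ≤ (m : ℝ)⁻¹)]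
    apply mul_le_mul_of_nonneg_left _ (by positivity)
    calc |∑ p, ∑ a, uhati a * ((∑ b, uj b * x p b) * x p a - lamj * uj a)|
        ≤ ∑ p, |∑ a, uhati a * ((∑ b, uj b * x p b) * x p a - lamj * uj a)| :=
          Finset.abs_sum_le_sum_abs _ _
      _ ≤ A := Finset.sum_le_sum fun p _ => hterm p
  -- gap bound
  have hgap : |lami - lamj| / 2 < |lamhati - lamj| := by
    rcases hne.lt_or_gt with h | h
    · have hs : Real.sign (lami - lamj) = -1 := Real.sign_of_neg (by linarith)
      rw [hs] at hcond
      have h2 : lamhati < (lami + lamj) / 2 := by nlinarith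
      have : lamj - lamhati > (lamj - lami) / 2 := by linarith
      calc |lami - lamj| / 2 = (lamj - lami) / 2 := by rw [abs_of_neg (by linarith)]; ring
        _ < lamj - lamhati := this
        _ ≤ |lamhati - lamj| := by rw [abs_sub_comm]; exact le_abs_self _
    · have hs : Real.sign (lami - lamj) = 1 := Real.sign_of_pos (by linarith)
      rw [hs] at hcond
      have : lamhati - lamj > (lami - lamj) / 2 := by nlinarith
      calc |lami - lamj| / 2 = (lami - lamj) / 2 := by rw [abs_of_pos (by linarith)]
        _ < lamhati - lamj := this
        _ ≤ |lamhati - lamj| := le_abs_self _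
  have hg0 : 0 < |lami - lamj| := abs_pos.mpr (sub_ne_zero.mpr hne)
  have hd0 : 0 < |lamhati - lamj| := lt_trans (by positivity) hgap
  have hA0 : 0 ≤ A := Finset.sum_nonneg fun p _ => Real.sqrt_nonneg _
  have h5 : |S| ≤ (m : ℝ)⁻¹ * A / |lamhati - lamj| := by
    rw [le_div_iff₀ hd0]
    calc |S| * |lamhati - lamj| = |lamhati - lamj| * |S| := mul_comm _ _
      _ ≤ (m : ℝ)⁻¹ * A := hbound
  calc |S| ≤ (m : ℝ)⁻¹ * A / |lamhati - lamj| := h5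
    _ ≤ (m : ℝ)⁻¹ * A / (|lami - lamj| / 2) := by
        apply div_le_div_of_nonneg_left (by positivity) (by positivity) hgap.le
    _ = 2 / (m * |lami - lamj|) * A := by
        field_simp
end

section
/- Let x_1,…,x_m be i.i.d. random vectors in ℝ^n on a probability space, with mean zero, positive definite covariance matrix C = E[x x^T], and E[‖x‖₂⁴] < ∞. Let Ĉ = (1/m) Σ_{p=1}^m x_p x_p^T, let u_1,…,u_n be an orthonormal basis of eigenvectors of C with eigenvalues λ_1 ≥ … ≥ λ_n > 0, and let ω ↦ (û_1(ω),…,û_n(ω)) be a measurable choice of an orthonormal basis of eigenvectors of Ĉ(ω) with eigenvalues λ̂_1(ω) ≥ … ≥ λ̂_n(ω). Fix an index i, an integer ℓ ≥ 0, set S = { j ∈ {1,…,n} : |j − i| > ℓ }, assume λ_j ≠ λ_i for every j ∈ S, set k_j = (E[‖x x^T u_j‖₂²] − λ_j²)^{1/2}, and let E be the event that sign(λ_i − λ_j)·2λ̂_i > sign(λ_i − λ_j)·(λ_i + λ_j) for every j ∈ S. Then for every t ∈ (0,1), P( E ∩ { Σ_{j: |j−i| ≤ ℓ} ⟨û_i,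 u_j⟩² < 1 − t } ) ≤ Σ_{j ∈ S} 4 k_j² / (m·t·(λ_i − λ_j)²). -/
open Matrix Finset MeasureTheory ProbabilityTheory

private lemma sq_int_to_int {Ω : Type*} [MeasurableSpace Ω] {μ : Measure Ω} [IsFiniteMeasure μ]
    {f : Ω → ℝ} (hf : AEStronglyMeasurable f μ) (h : Integrable (fun ω => f ω ^ 2) μ) :
    Integrable f μ := by
  refine ((h.add (integrable_const 1)).div_const 2).mono' hf (ae_of_all _ fun ω => ?_)
  rw [Real.norm_eq_abs]
  simp only [Pi.add_apply]
  nlinarith [sq_nonneg (|f ω| - 1), sq_abs (f ω)]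

/-- `Y u v a = v a * ⟨v, u⟩`, the `a`-th coordinate of `(v vᵀ) u`. -/
private def Y {n : ℕ} (u v : Fin n → ℝ) (a : Fin n) : ℝ := v a * ∑ b, v b * u b

/-- (Principal-component localization, eq. (14) of the paper.) In the
i.i.d. setting with positive definite covariance `C`, orthonormal eigenpairs `(u, λ)`
of `C` (nonincreasing, positive) and measurable eigenpairs `(û(ω), λ̂(ω))` of the
sample covariance `Ĉ(ω)` (nonincreasing): for a fixed index `i`, slack `ℓ ≥ 0`,
`S = {j : |j - i| > ℓ}` with `λ_j ≠ λ_i` for `j ∈ S`, and the event `E` that the sign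
condition holds for every `j ∈ S`, for every `t ∈ (0, 1)`:
`P(E ∩ {∑_{|j-i| ≤ ℓ} ⟨û_i, u_j⟩² < 1 - t}) ≤ ∑_{j ∈ S} 4 k_j² / (m t (λ_i - λ_j)²)`. -/
theorem principal_component_localization {Ω : Type*} [MeasurableSpace Ω]
    (μ : Measure Ω) [IsProbabilityMeasure μ]
    {n m : ℕ} (hm : 0 < m)
    (x : Fin m → Ω → Fin n → ℝ)
    (hmeas : ∀ p, Measurable (x p))
    (hindep : iIndepFun x μ)
    (hident : ∀ p, IdentDistrib (x p) (x ⟨0, hm⟩) μ μ)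
    (hmean : ∀ a, ∫ ω, x ⟨0, hm⟩ ω a ∂μ = 0)
    (C : Matrix (Fin n) (Fin n) ℝ) (hCpos : C.PosDef)
    (hC : ∀ a b, C a b = ∫ ω, x ⟨0, hm⟩ ω a * x ⟨0, hm⟩ ω b ∂μ)
    (hL4 : Integrable (fun ω => (∑ a, x ⟨0, hm⟩ ω a ^ 2) ^ 2) μ)
    (Chat : Ω → Matrix (Fin n) (Fin n) ℝ)
    (hChat : ∀ ω, Chat ω = (m : ℝ)⁻¹ • ∑ p, vecMulVec (x p ω) (x p ω))
    (u : Fin n → Fin n → ℝ) (lam : Fin n → ℝ)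
    (hlam : Antitone lam) (hlampos : ∀ k, 0 < lam k)
    (huortho : ∀ k l, ∑ a, u k a * u l a = if k = l then 1 else 0)
    (hueig : ∀ k, C.mulVec (u k) = lam k • u k)
    (uhat : Fin n → Ω → Fin n → ℝ) (lamhat : Fin n → Ω → ℝ)
    (huhatmeas : ∀ k, Measurable (uhat k))
    (hlamhatmeas : ∀ k, Measurable (lamhat k))
    (huhatortho : ∀ ω k l, ∑ a, uhat k ω a * uhat l ω a = if k = l then 1 else 0)
    (huhateig : ∀ ω k, (Chat ω).mulVec (uhat k ω) = lamhat k ω • uhat k ω)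
    (hlamhatmono : ∀ ω, Antitone (fun k => lamhat k ω))
    (i : Fin n) (ℓ : ℕ)
    (hsep : ∀ j : Fin n, (ℓ : ℤ) < |(j : ℤ) - (i : ℤ)| → lam j ≠ lam i)
    (k : Fin n → ℝ)
    (hk : ∀ j, k j = Real.sqrt
      ((∫ ω, ∑ a, ((vecMulVec (x ⟨0, hm⟩ ω) (x ⟨0, hm⟩ ω)).mulVec (u j) a) ^ 2 ∂μ)
        - lam j ^ 2))
    (t : ℝ) (ht0 : 0 < t) (ht1 : t < 1) :
    (μ {ω | (∀ j : Fin n, (ℓ : ℤ) < |(j : ℤ) - (i : ℤ)| →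
              Real.sign (lam i - lam j) * (2 * lamhat i ω)
                > Real.sign (lam i - lam j) * (lam i + lam j))
            ∧ ∑ j ∈ Finset.univ.filter (fun j : Fin n => |(j : ℤ) - (i : ℤ)| ≤ (ℓ : ℤ)),
                (∑ a, uhat i ω a * u j a) ^ 2 < 1 - t}).toReal
      ≤ ∑ j ∈ Finset.univ.filter (fun j : Fin n => (ℓ : ℤ) < |(j : ℤ) - (i : ℤ)|),
          4 * k j ^ 2 / (m * t * (lam i - lam j) ^ 2) := by
  classical
  have hmR : (0 : ℝ) < m := Nat.cast_pos.mpr hm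
  have hm0 : (m : ℝ) ≠ 0 := ne_of_gt hmR
  set x0 : Ω → Fin n → ℝ := x ⟨0, hm⟩ with hx0def
  set S : Finset (Fin n) :=
    Finset.univ.filter (fun j : Fin n => (ℓ : ℤ) < |(j : ℤ) - (i : ℤ)|) with hSdef
  -- basic norms
  have hunorm : ∀ j, ∑ a, u j a ^ 2 = 1 := by
    intro j; have := huortho j j; simpa [sq] using this
  have hxa : ∀ p a, Measurable fun ω => x p ω a := fun p a =>
    (measurable_pi_apply a).comp (hmeas p)
  -- integrability of the 4th moment for every sample
  have hnormsq : ∀ p, Integrable (fun ω => (∑ a, x p ω a ^ 2) ^ 2) μ := by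
    intro p
    have hmf : Measurable (fun v : Fin n → ℝ => (∑ a, v a ^ 2) ^ 2) := by fun_prop
    exact ((hident p).comp hmf).integrable_iff.mpr hL4
  have hnorm2meas : ∀ p, Measurable (fun ω => ∑ a, x p ω a ^ 2) := by
    intro p
    exact Finset.measurable_sum _ fun a _ => (hxa p a).pow_const 2
  have hnorm2 : ∀ p, Integrable (fun ω => ∑ a, x p ω a ^ 2) μ := fun p =>
    sq_int_to_int (hnorm2meas p).aestronglyMeasurable (hnormsq p)
  -- Y facts
  have hYmeasv : ∀ (j : Fin n) (a : Fin n), Measurable (fun v : Fin n → ℝ => Y (u j) v a) := by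
    intro j a; unfold Y; fun_prop
  have hYmeas : ∀ j p a, Measurable fun ω => Y (u j) (x p ω) a := fun j p a =>
    (hYmeasv j a).comp (hmeas p)
  have hYbound : ∀ (j : Fin n) p ω a, (Y (u j) (x p ω) a) ^ 2 ≤ (∑ b, x p ω b ^ 2) ^ 2 := by
    intro j p ω a
    have h1 : (x p ω a) ^ 2 ≤ ∑ b, x p ω b ^ 2 :=
      Finset.single_le_sum (f := fun b => x p ω b ^ 2) (fun b _ => sq_nonneg _) (mem_univ a)
    have h2 : (∑ b, x p ω b * u j b) ^ 2 ≤ (∑ b, x p ω b ^ 2) * 1 := by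
      have := Finset.sum_mul_sq_le_sq_mul_sq univ (fun b => x p ω b) (u j)
      rwa [hunorm j] at this
    have h0 : (0:ℝ) ≤ ∑ b, x p ω b ^ 2 := Finset.sum_nonneg fun b _ => sq_nonneg _
    have : (Y (u j) (x p ω) a) ^ 2 = (x p ω a) ^ 2 * (∑ b, x p ω b * u j b) ^ 2 := by
      unfold Y; ring
    rw [this]
    calc (x p ω a) ^ 2 * (∑ b, x p ω b * u j b) ^ 2
        ≤ (∑ b, x p ω b ^ 2) * ((∑ b, x p ω b ^ 2) * 1) :=
          mul_le_mul h1 h2 (sq_nonneg _) h0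
      _ = (∑ b, x p ω b ^ 2) ^ 2 := by ring
  have hYsqint : ∀ j p a, Integrable (fun ω => (Y (u j) (x p ω) a) ^ 2) μ := by
    intro j p a
    refine (hnormsq p).mono' ((hYmeas j p a).pow_const 2).aestronglyMeasurable
      (ae_of_all _ fun ω => ?_)
    rw [Real.norm_eq_abs, abs_of_nonneg (sq_nonneg _)]
    exact hYbound j p ω a
  have hYint : ∀ j p a, Integrable (fun ω => Y (u j) (x p ω) a) μ := fun j p a =>
    sq_int_to_int (hYmeas j p a).aestronglyMeasurable (hYsqint j p a)
  -- mean of Y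
  have hxxint : ∀ a b, Integrable (fun ω => x0 ω a * x0 ω b) μ := by
    intro a b
    refine (hnorm2 ⟨0, hm⟩).mono'
      (((hxa _ a).mul (hxa _ b)).aestronglyMeasurable) (ae_of_all _ fun ω => ?_)
    rw [Real.norm_eq_abs, abs_mul]
    have h1 : (x0 ω a) ^ 2 ≤ ∑ c, x0 ω c ^ 2 :=
      Finset.single_le_sum (f := fun c => x0 ω c ^ 2) (fun c _ => sq_nonneg _) (mem_univ a)
    have h2 : (x0 ω b) ^ 2 ≤ ∑ c, x0 ω c ^ 2 :=
      Finset.single_le_sum (f := fun c => x0 ω c ^ 2) (fun c _ => sq_nonneg _) (mem_univ b)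
    nlinarith [sq_nonneg (|x0 ω a| - |x0 ω b|), sq_abs (x0 ω a), sq_abs (x0 ω b),
      abs_nonneg (x0 ω a), abs_nonneg (x0 ω b)]
  have hYmean : ∀ j p a, ∫ ω, Y (u j) (x p ω) a ∂μ = lam j * u j a := by
    intro j p a
    have hid : ∫ ω, Y (u j) (x p ω) a ∂μ = ∫ ω, Y (u j) (x0 ω) a ∂μ :=
      ((hident p).comp (hYmeasv j a)).integral_eq
    rw [hid]
    have h1 : (fun ω => Y (u j) (x0 ω) a) = fun ω => ∑ b, (x0 ω a * x0 ω b) * u j b := by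
      funext ω; unfold Y; rw [Finset.mul_sum]
      exact Finset.sum_congr rfl fun b _ => by ring
    rw [h1, integral_finset_sum _ fun b _ => (hxxint a b).mul_const _]
    have h2 : ∀ b ∈ Finset.univ, (∫ ω, (x0 ω a * x0 ω b) * u j b ∂μ) = C a b * u j b := by
      intro b _
      rw [integral_mul_const, ← hC a b]
    rw [Finset.sum_congr rfl h2]
    have h3 := congrFun (hueig j) a
    simp only [Matrix.mulVec, dotProduct, Pi.smul_apply, smul_eq_mul] at h3
    exact h3
  have hYsqsame : ∀ j p a,
      ∫ ω, (Y (u j) (x p ω) a) ^ 2 ∂μ = ∫ ω, (Y (u j) (x0 ω) a) ^ 2 ∂μ := by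
    intro j p a
    have hmf : Measurable (fun v : Fin n → ℝ => (Y (u j) v a) ^ 2) := (hYmeasv j a).pow_const 2
    exact ((hident p).comp hmf).integral_eq
  -- centered variables
  have hZZind : ∀ (j : Fin n) (p q : Fin m) (a : Fin n), p ≠ q →
      IndepFun (fun ω => Y (u j) (x p ω) a - lam j * u j a)
        (fun ω => Y (u j) (x q ω) a - lam j * u j a) μ := by
    intro j p q a hpq
    have hφ : Measurable (fun v : Fin n → ℝ => Y (u j) v a - lam j * u j a) :=
      (hYmeasv j a).sub measurable_const
    exact (hindep.indepFun hpq).comp hφ hφ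
  have hZint : ∀ j p a, Integrable (fun ω => Y (u j) (x p ω) a - lam j * u j a) μ :=
    fun j p a => (hYint j p a).sub (integrable_const _)
  have hZZint : ∀ (j : Fin n) (p q : Fin m) (a : Fin n),
      Integrable (fun ω => (Y (u j) (x p ω) a - lam j * u j a)
        * (Y (u j) (x q ω) a - lam j * u j a)) μ := by
    intro j p q a
    rcases eq_or_ne p q with rfl | hpq
    · have hfe : (fun ω => (Y (u j) (x p ω) a - lam j * u j a)
          * (Y (u j) (x p ω) a - lam j * u j a))
          = fun ω => (Y (u j) (x p ω) a) ^ 2 - 2 * (lam j * u j a) * Y (u j) (x p ω) a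
            + (lam j * u j a) ^ 2 := by
        funext ω; ring
      rw [hfe]
      exact ((hYsqint j p a).sub ((hYint j p a).const_mul _)).add (integrable_const _)
    · exact (hZZind j p q a hpq).integrable_mul (hZint j p a) (hZint j q a)
  have hZmean : ∀ j p a, ∫ ω, (Y (u j) (x p ω) a - lam j * u j a) ∂μ = 0 := by
    intro j p a
    rw [integral_sub (hYint j p a) (integrable_const _), hYmean, integral_const]
    simp
  have hZZcross : ∀ (j : Fin n) (p q : Fin m) (a : Fin n), p ≠ q →
      ∫ ω, (Y (u j) (x p ω) a - lam j * u j a)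
        * (Y (u j) (x q ω) a - lam j * u j a) ∂μ = 0 := by
    intro j p q a hpq
    rw [(hZZind j p q a hpq).integral_fun_mul_eq_mul_integral (hZint j p a).aestronglyMeasurable
      (hZint j q a).aestronglyMeasurable, hZmean, zero_mul]
  have hZZdiag : ∀ (j : Fin n) (p : Fin m) (a : Fin n),
      ∫ ω, (Y (u j) (x p ω) a - lam j * u j a)
        * (Y (u j) (x p ω) a - lam j * u j a) ∂μ
      = (∫ ω, (Y (u j) (x0 ω) a) ^ 2 ∂μ) - (lam j * u j a) ^ 2 := by
    intro j p a
    have h1 : (fun ω => (Y (u j) (x p ω) a - lam j * u j a)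
        * (Y (u j) (x p ω) a - lam j * u j a))
        = fun ω => ((Y (u j) (x p ω) a) ^ 2 - 2 * (lam j * u j a) * Y (u j) (x p ω) a)
            + (lam j * u j a) ^ 2 := by
      funext ω; ring
    have hint3 : Integrable (fun ω => 2 * (lam j * u j a) * Y (u j) (x p ω) a) μ :=
      (hYint j p a).const_mul _
    have hint2 : Integrable (fun ω => (Y (u j) (x p ω) a) ^ 2
        - 2 * (lam j * u j a) * Y (u j) (x p ω) a) μ := (hYsqint j p a).sub hint3
    rw [h1, integral_add hint2 (integrable_const _),
      integral_sub (hYsqint j p a) hint3, integral_const_mul,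
      hYmean j p a, hYsqsame j p a, integral_const]
    simp only [measure_univ, ENNReal.toReal_one, smul_eq_mul, one_mul, probReal_univ, mul_one]
    ring
  -- the error functional G
  set G : Fin n → Ω → ℝ := fun j ω => ∑ a, ((Chat ω - C).mulVec (u j)) a ^ 2 with hGdef
  have hGpt : ∀ j ω, G j ω = (m : ℝ)⁻¹ ^ 2
      * ∑ p, ∑ q, ∑ a, (Y (u j) (x p ω) a - lam j * u j a)
          * (Y (u j) (x q ω) a - lam j * u j a) := by
    intro j ω
    have hcoord : ∀ a, ((Chat ω - C).mulVec (u j)) a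
        = (m : ℝ)⁻¹ * ∑ p, (Y (u j) (x p ω) a - lam j * u j a) := by
      intro a
      have h1 : ((Chat ω).mulVec (u j)) a = (m : ℝ)⁻¹ * ∑ p, Y (u j) (x p ω) a := by
        rw [hChat ω]
        simp only [Matrix.mulVec, dotProduct, Matrix.smul_apply, Matrix.sum_apply,
          Matrix.vecMulVec_apply, smul_eq_mul]
        unfold Y
        beta_reduce
        simp only [Finset.mul_sum, Finset.sum_mul]
        rw [Finset.sum_comm]
        exact Finset.sum_congr rfl fun p _ => Finset.sum_congr rfl fun b _ => by ring
      have h2 : (C.mulVec (u j)) a = lam j * u j a := by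
        rw [hueig j]; simp [smul_eq_mul]
      rw [Matrix.sub_mulVec]
      simp only [Pi.sub_apply]
      rw [h1, h2, Finset.sum_sub_distrib, Finset.sum_const, Finset.card_univ,
        Fintype.card_fin, nsmul_eq_mul, mul_sub]
      rw [inv_mul_cancel_left₀ hm0]
    simp only [hGdef]
    have hstep : ∀ a, ((Chat ω - C).mulVec (u j)) a ^ 2
        = (m : ℝ)⁻¹ ^ 2 * ∑ p, ∑ q, (Y (u j) (x p ω) a - lam j * u j a)
            * (Y (u j) (x q ω) a - lam j * u j a) := by
      intro a
      rw [hcoord a, mul_pow, pow_two (∑ p, (Y (u j) (x p ω) a - lam j * u j a)),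
        Finset.sum_mul_sum]
    rw [Finset.sum_congr rfl fun a _ => hstep a, ← Finset.mul_sum]
    congr 1
    rw [Finset.sum_comm]
    exact Finset.sum_congr rfl fun p _ => Finset.sum_comm
  have hGnonneg : ∀ j ω, 0 ≤ G j ω := fun j ω =>
    Finset.sum_nonneg fun a _ => sq_nonneg _
  have hGint : ∀ j, Integrable (G j) μ := by
    intro j
    have : G j = fun ω => (m : ℝ)⁻¹ ^ 2
        * ∑ p, ∑ q, ∑ a, (Y (u j) (x p ω) a - lam j * u j a)
            * (Y (u j) (x q ω) a - lam j * u j a) := funext fun ω => hGpt j ω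
    rw [this]
    exact (integrable_finset_sum _ fun p _ => integrable_finset_sum _ fun q _ =>
      integrable_finset_sum _ fun a _ => hZZint j p q a).const_mul _
  set V : Fin n → ℝ := fun j =>
    ∫ ω, ∑ a, ((vecMulVec (x0 ω) (x0 ω)).mulVec (u j) a) ^ 2 ∂μ with hVdef
  have hVY : ∀ j, V j = ∑ a, ∫ ω, (Y (u j) (x0 ω) a) ^ 2 ∂μ := by
    intro j
    simp only [hVdef]
    have h1 : ∀ ω, (∑ a, ((vecMulVec (x0 ω) (x0 ω)).mulVec (u j)) a ^ 2)
        = ∑ a, (Y (u j) (x0 ω) a) ^ 2 := by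
      intro ω
      refine Finset.sum_congr rfl fun a _ => ?_
      congr 1
      simp only [Matrix.mulVec, dotProduct, Matrix.vecMulVec_apply]
      unfold Y
      rw [Finset.mul_sum]
      exact Finset.sum_congr rfl fun b _ => by ring
    simp_rw [h1]
    exact integral_finset_sum _ fun a _ => hYsqint j ⟨0, hm⟩ a
  have hGval : ∀ j, ∫ ω, G j ω ∂μ = (m : ℝ)⁻¹ * (V j - lam j ^ 2) := by
    intro j
    have hfe : (fun ω => G j ω) = fun ω => (m : ℝ)⁻¹ ^ 2
        * ∑ p, ∑ q, ∑ a, (Y (u j) (x p ω) a - lam j * u j a)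
            * (Y (u j) (x q ω) a - lam j * u j a) := funext fun ω => hGpt j ω
    have hint1 : ∀ p ∈ (Finset.univ : Finset (Fin m)), Integrable (fun ω =>
        ∑ q, ∑ a, (Y (u j) (x p ω) a - lam j * u j a)
          * (Y (u j) (x q ω) a - lam j * u j a)) μ := fun p _ =>
      integrable_finset_sum _ fun q _ => integrable_finset_sum _ fun a _ => hZZint j p q a
    rw [show ∫ ω, G j ω ∂μ = ∫ ω, (m : ℝ)⁻¹ ^ 2
        * ∑ p, ∑ q, ∑ a, (Y (u j) (x p ω) a - lam j * u j a)
            * (Y (u j) (x q ω) a - lam j * u j a) ∂μ from congrArg _ hfe,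
      integral_const_mul, integral_finset_sum _ hint1]
    have h2 : ∀ p ∈ (Finset.univ : Finset (Fin m)), ∫ ω, ∑ q, ∑ a,
        (Y (u j) (x p ω) a - lam j * u j a)
          * (Y (u j) (x q ω) a - lam j * u j a) ∂μ = V j - lam j ^ 2 := by
      intro p _
      rw [integral_finset_sum _ fun q _ => integrable_finset_sum _ fun a _ => hZZint j p q a]
      rw [Finset.sum_congr rfl fun q _ =>
        integral_finset_sum _ fun a _ => hZZint j p q a]
      rw [Finset.sum_eq_single p
        (fun q _ hq => by
          rw [Finset.sum_congr rfl fun a _ => hZZcross j p q a (Ne.symm hq)]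
          simp)
        (fun h => absurd (Finset.mem_univ p) h)]
      rw [Finset.sum_congr rfl fun a _ => hZZdiag j p a, Finset.sum_sub_distrib, ← hVY j]
      congr 1
      have : ∀ a ∈ Finset.univ, (lam j * u j a) ^ 2 = lam j ^ 2 * u j a ^ 2 :=
        fun a _ => by ring
      rw [Finset.sum_congr rfl this, ← Finset.mul_sum, hunorm j, mul_one]
    rw [Finset.sum_congr rfl h2, Finset.sum_const, Finset.card_univ, Fintype.card_fin,
      nsmul_eq_mul]
    field_simp
  have hVnonneg : ∀ j, 0 ≤ V j - lam j ^ 2 := by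
    intro j
    have h0 : 0 ≤ ∫ ω, G j ω ∂μ := integral_nonneg fun ω => hGnonneg j ω
    rw [hGval j] at h0
    by_contra h
    push_neg at h
    nlinarith [mul_pos (inv_pos.mpr hmR) (neg_pos.mpr h)]
  have hksq : ∀ j, k j ^ 2 = V j - lam j ^ 2 := by
    intro j
    have : k j = Real.sqrt (V j - lam j ^ 2) := hk j
    rw [this]
    exact Real.sq_sqrt (hVnonneg j)
  -- the Chebyshev functional Z
  set Z : Ω → ℝ := fun ω => ∑ j ∈ S, 4 / (lam i - lam j) ^ 2 * G j ω with hZdef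
  have hZnonneg : ∀ ω, 0 ≤ Z ω := by
    intro ω
    exact Finset.sum_nonneg fun j _ => mul_nonneg (by positivity) (hGnonneg j ω)
  have hZintble : Integrable Z μ := by
    rw [hZdef]
    exact integrable_finset_sum _ fun j _ => (hGint j).const_mul _
  have hZval : ∫ ω, Z ω ∂μ = ∑ j ∈ S, 4 / (lam i - lam j) ^ 2 * ((m : ℝ)⁻¹ * k j ^ 2) := by
    rw [hZdef, integral_finset_sum _ fun j _ => (hGint j).const_mul _]
    refine Finset.sum_congr rfl fun j _ => ?_
    rw [integral_const_mul, hGval j, hksq j]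
  -- Step A : the event is contained in {t ≤ Z}
  have hsub : {ω | (∀ j : Fin n, (ℓ : ℤ) < |(j : ℤ) - (i : ℤ)| →
              Real.sign (lam i - lam j) * (2 * lamhat i ω)
                > Real.sign (lam i - lam j) * (lam i + lam j))
            ∧ ∑ j ∈ Finset.univ.filter (fun j : Fin n => |(j : ℤ) - (i : ℤ)| ≤ (ℓ : ℤ)),
                (∑ a, uhat i ω a * u j a) ^ 2 < 1 - t} ⊆ {ω | t ≤ Z ω} := by
    intro ω hω
    simp only [Set.mem_setOf_eq] at hω ⊢
    obtain ⟨hE, hloc⟩ := hω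
    have hU : ∀ a b, (∑ j, u j a * u j b) = if a = b then 1 else 0 := by
      have h1 : (Matrix.of u) * (Matrix.of u)ᵀ = 1 := by
        ext k' l
        simp only [Matrix.mul_apply, Matrix.transpose_apply, Matrix.of_apply, Matrix.one_apply]
        exact huortho k' l
      have h2 := mul_eq_one_comm.mp h1
      intro a b
      have h3 := congrFun (congrFun h2 a) b
      simpa [Matrix.mul_apply, Matrix.transpose_apply, Matrix.of_apply, Matrix.one_apply]
        using h3
    have hpars : ∑ j, (∑ a, uhat i ω a * u j a) ^ 2 = 1 := by
      have hexp : ∀ j : Fin n, (∑ a, uhat i ω a * u j a) ^ 2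
          = ∑ a, ∑ b, (uhat i ω a * uhat i ω b) * (u j a * u j b) := by
        intro j
        rw [pow_two, Finset.sum_mul_sum]
        exact Finset.sum_congr rfl fun a _ => Finset.sum_congr rfl fun b _ => by ring
      rw [Finset.sum_congr rfl fun j _ => hexp j, Finset.sum_comm,
        Finset.sum_congr rfl fun a _ => Finset.sum_comm]
      have h4 : ∀ a b, (∑ j, (uhat i ω a * uhat i ω b) * (u j a * u j b))
          = (uhat i ω a * uhat i ω b) * (if a = b then 1 else 0) := by
        intro a b; rw [← Finset.mul_sum, hU a b]
      rw [Finset.sum_congr rfl fun a _ => Finset.sum_congr rfl fun b _ => h4 a b]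
      simp only [mul_ite, mul_one, mul_zero, Finset.sum_ite_eq', Finset.mem_univ, if_true]
      simpa [pow_two] using huhatortho ω i i
    have hSeq : Finset.univ.filter (fun j : Fin n => ¬ (|(j : ℤ) - (i : ℤ)| ≤ (ℓ : ℤ))) = S := by
      rw [hSdef]; ext j; simp [not_le]
    have hsplit := Finset.sum_filter_add_sum_filter_not Finset.univ
      (fun j : Fin n => |(j : ℤ) - (i : ℤ)| ≤ (ℓ : ℤ))
      (fun j => (∑ a, uhat i ω a * u j a) ^ 2)
    rw [hSeq, hpars] at hsplit
    have hSt : t < ∑ j ∈ S, (∑ a, uhat i ω a * u j a) ^ 2 := by linarith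
    have hterm : ∀ j ∈ S, (∑ a, uhat i ω a * u j a) ^ 2 ≤ 4 / (lam i - lam j) ^ 2 * G j ω := by
      intro j hj
      have hjS : (ℓ : ℤ) < |(j : ℤ) - (i : ℤ)| := by
        rw [hSdef, Finset.mem_filter] at hj; exact hj.2
      have hne : lam j ≠ lam i := hsep j hjS
      have hEj := hE j hjS
      have hsym : (Chat ω)ᵀ = Chat ω := by
        rw [hChat ω, Matrix.transpose_smul, Matrix.transpose_sum]
        congr 1
        refine Finset.sum_congr rfl fun p _ => ?_
        refine Matrix.ext fun a b => ?_
        rw [Matrix.transpose_apply, Matrix.vecMulVec_apply, Matrix.vecMulVec_apply, mul_comm]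
      have ha1 : ∑ a, uhat i ω a * ((Chat ω - C).mulVec (u j)) a
          = (lamhat i ω - lam j) * ∑ a, uhat i ω a * u j a := by
        have h1 : uhat i ω ⬝ᵥ (Chat ω).mulVec (u j)
            = lamhat i ω * ∑ a, uhat i ω a * u j a := by
          rw [Matrix.dotProduct_mulVec, ← hsym, Matrix.vecMul_transpose, huhateig ω i,
            smul_dotProduct]
          simp only [smul_eq_mul]
          rfl
        have h2 : uhat i ω ⬝ᵥ C.mulVec (u j) = lam j * ∑ a, uhat i ω a * u j a := by
          rw [hueig j, dotProduct_smul]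
          simp only [smul_eq_mul]
          rfl
        have h0 : ∑ a, uhat i ω a * ((Chat ω - C).mulVec (u j)) a
            = uhat i ω ⬝ᵥ (Chat ω - C).mulVec (u j) := rfl
        rw [h0, Matrix.sub_mulVec, dotProduct_sub, h1, h2]
        ring
      have hgap : (lam i - lam j) ^ 2 / 4 ≤ (lamhat i ω - lam j) ^ 2 := by
        rcases hne.lt_or_gt with h | h
        · have hs1 : Real.sign (lam i - lam j) = 1 := Real.sign_of_pos (by linarith)
          rw [hs1, one_mul, one_mul] at hEj
          nlinarith
        · have hs1 : Real.sign (lam i - lam j) = -1 := Real.sign_of_neg (by linarith)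
          rw [hs1] at hEj
          nlinarith
      have hcs : (∑ a, uhat i ω a * ((Chat ω - C).mulVec (u j)) a) ^ 2 ≤ G j ω := by
        have h1 := Finset.sum_mul_sq_le_sq_mul_sq Finset.univ (fun a => uhat i ω a)
          (fun a => ((Chat ω - C).mulVec (u j)) a)
        have h2 : (∑ a, uhat i ω a ^ 2) = 1 := by simpa [pow_two] using huhatortho ω i i
        rw [h2, one_mul] at h1
        simpa [hGdef] using h1
      rw [ha1] at hcs
      have hd2 : (0:ℝ) < (lam i - lam j) ^ 2 := by
        have hd0 : lam i - lam j ≠ 0 := sub_ne_zero.mpr (Ne.symm hne)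
        positivity
      have key : (∑ a, uhat i ω a * u j a) ^ 2 * (lam i - lam j) ^ 2 ≤ 4 * G j ω := by
        nlinarith [mul_le_mul_of_nonneg_right hgap (sq_nonneg (∑ a, uhat i ω a * u j a))]
      calc (∑ a, uhat i ω a * u j a) ^ 2
          = (∑ a, uhat i ω a * u j a) ^ 2 * (lam i - lam j) ^ 2 / (lam i - lam j) ^ 2 := by
            field_simp
        _ ≤ 4 * G j ω / (lam i - lam j) ^ 2 := by
            exact (div_le_div_iff_of_pos_right hd2).mpr key
        _ = 4 / (lam i - lam j) ^ 2 * G j ω := by ring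
    calc t ≤ ∑ j ∈ S, (∑ a, uhat i ω a * u j a) ^ 2 := le_of_lt hSt
      _ ≤ ∑ j ∈ S, 4 / (lam i - lam j) ^ 2 * G j ω := Finset.sum_le_sum hterm
      _ = Z ω := by simp only [hZdef]
  -- Markov and conclusion
  have hmarkov := mul_meas_ge_le_integral_of_nonneg (ae_of_all μ hZnonneg) hZintble t
  have hmono : (μ {ω | (∀ j : Fin n, (ℓ : ℤ) < |(j : ℤ) - (i : ℤ)| →
              Real.sign (lam i - lam j) * (2 * lamhat i ω)
                > Real.sign (lam i - lam j) * (lam i + lam j))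
            ∧ ∑ j ∈ Finset.univ.filter (fun j : Fin n => |(j : ℤ) - (i : ℤ)| ≤ (ℓ : ℤ)),
                (∑ a, uhat i ω a * u j a) ^ 2 < 1 - t}).toReal
      ≤ (μ {ω | t ≤ Z ω}).toReal :=
    ENNReal.toReal_mono (measure_ne_top μ _) (measure_mono hsub)
  refine le_trans hmono ?_
  have h1 : (μ {ω | t ≤ Z ω}).toReal ≤ (∫ ω, Z ω ∂μ) / t := by
    rw [le_div_iff₀ ht0]
    calc (μ {ω | t ≤ Z ω}).toReal * t = t * (μ {ω | t ≤ Z ω}).toReal := by ring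
      _ ≤ ∫ ω, Z ω ∂μ := hmarkov
  refine le_trans h1 ?_
  rw [hZval, Finset.sum_div]
  refine le_of_eq (Finset.sum_congr rfl fun j hj => ?_)
  have hne : lam i - lam j ≠ 0 := by
    have hjS : (ℓ : ℤ) < |(j : ℤ) - (i : ℤ)| := by
      have := hj; rw [hSdef, Finset.mem_filter] at this; exact this.2
    exact sub_ne_zero.mpr (Ne.symm (hsep j hjS))
  simp only [div_eq_mul_inv, mul_inv]
  ring
end
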